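/- arXiv:2412.04196 — 12 statements merged into one kernel-verified Lean document; each statement's English description precedes it below -/
import Mathlib

section
/- For every number field K, the discriminant of K over ℚ is congruent to 0 or 1 modulo 4 (Stickelberger's theorem). -/
open Polynomial NumberField Algebra Matrix Finset Module

/-- An element of a normal algebraically closed extension fixed by every automorphism
lies in the bottom subalgebra. -/
lemma fixed_mem_bot {E : Type*} [Field E] [Algebra ℚ E] [IsAlgClosed E] [Normal ℚ E]
    (x : E) (h : ∀ σ : E ≃ₐ[ℚ] E, σ x = x) : x ∈ (⊥ : Subalgebra ℚ E) := by
  by_contra hx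
  have hint : IsIntegral ℚ x := Normal.isIntegral inferInstance x
  have hsep : IsSeparable ℚ x := (minpoly.irreducible hint).separable
  have hsp : ((minpoly ℚ x).map (algebraMap ℚ E)).Splits := IsAlgClosed.splits _
  obtain ⟨y, hne, hconj⟩ := (notMem_iff_exists_ne_and_isConjRoot hsep hsp).mp hx
  obtain ⟨σ, hσ⟩ := hconj.symm.exists_algEquiv
  exact hne (by rw [← h σ, hσ])

/- Stickelberger's theorem: the discriminant of a number field is congruent to
`0` or `1` modulo `4`. -/
theorem stickelberger (K : Type*) [Field K] [NumberField K] :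
    NumberField.discr K % 4 = 0 ∨ NumberField.discr K % 4 = 1 := by
  classical
  set E := AlgebraicClosure ℚ with hE
  set ι := Module.Free.ChooseBasisIndex ℤ (𝓞 K) with hι
  have hcard : Fintype.card ι = Fintype.card (K →ₐ[ℚ] E) := by
    rw [AlgHom.card, ← Module.finrank_eq_card_chooseBasisIndex,
      NumberField.RingOfIntegers.rank K]
  set e : ι ≃ (K →ₐ[ℚ] E) := Fintype.equivOfCardEq hcard with he
  set b : ι → K := ⇑(integralBasis K) with hb
  set M : Matrix ι ι E := embeddingsMatrixReindex ℚ E b e with hM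
  have hMapp : ∀ i j, M i j = e j (b i) := by
    intro i j
    simp [hM, embeddingsMatrixReindex, embeddingsMatrix]
  have hdisc : algebraMap ℚ E (Algebra.discr ℚ b) = M.det ^ 2 :=
    Algebra.discr_eq_det_embeddingsMatrixReindex_pow_two ℚ E b e
  -- the terms of the determinant
  set T : Equiv.Perm ι → E := fun π => ∏ i, M (π i) i with hT
  set S : ℤˣ → E := fun u => ∑ π ∈ univ.filter (fun π => Equiv.Perm.sign π = u), T π
    with hS
  set P : E := S 1 with hP
  set N : E := S (-1) with hN
  have hdet : M.det = P - N := by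
    rw [Matrix.det_apply, ← Finset.sum_filter_add_sum_filter_not Finset.univ
      (fun π => Equiv.Perm.sign π = 1) (fun π => Equiv.Perm.sign π • T π)]
    rw [sub_eq_add_neg]
    congr 1
    · exact Finset.sum_congr rfl fun π hπ => by
        rw [(Finset.mem_filter.mp hπ).2, one_smul]
    · rw [hN, hS, ← Finset.sum_neg_distrib]
      apply Finset.sum_congr
      · apply Finset.filter_congr
        intro π _
        rcases Int.units_eq_one_or (Equiv.Perm.sign π) with h | h <;> simp [h]
      · intro π hπ
        rw [(Finset.mem_filter.mp hπ).2]
        simp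
  -- Galois invariance
  have key : ∀ σ : E ≃ₐ[ℚ] E, σ (P + N) = P + N ∧ σ (P * N) = P * N := by
    intro σ
    set μ : Equiv.Perm (K →ₐ[ℚ] E) :=
      { toFun := fun f => σ.toAlgHom.comp f
        invFun := fun f => σ.symm.toAlgHom.comp f
        left_inv := fun f => by ext x; simp
        right_inv := fun f => by ext x; simp } with hμ
    set ν : Equiv.Perm ι := e.permCongr.symm μ with hν
    have heν : ∀ j, e (ν j) = μ (e j) := by
      intro j
      simp [hν, Equiv.permCongr_apply]
    have hMσ : ∀ i j, σ (M i j) = M i (ν j) := by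
      intro i j
      rw [hMapp, hMapp, heν]
      rfl
    have hTσ : ∀ π, σ (T π) = T (π * ν⁻¹) := by
      intro π
      rw [hT]
      simp only [Equiv.Perm.mul_apply]
      rw [map_prod, ← Equiv.prod_comp ν (fun j => M (π (ν⁻¹ j)) j)]
      apply Finset.prod_congr rfl
      intro i _
      rw [hMσ]
      simp
    have hSσ : ∀ u, σ (S u) = S (u * Equiv.Perm.sign ν) := by
      intro u
      rw [hS]
      simp only
      rw [map_sum]
      refine Finset.sum_equiv (Equiv.mulRight ν⁻¹) ?_ ?_
      · intro π
        simp only [Finset.mem_filter, Finset.mem_univ, true_and, Equiv.coe_mulRight]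
        rw [Equiv.Perm.sign_mul, Equiv.Perm.sign_inv]
        constructor
        · rintro rfl; rfl
        · intro h; exact mul_right_cancel h
      · intro π _
        rw [hTσ]
        rfl
    rcases Int.units_eq_one_or (Equiv.Perm.sign ν) with h | h
    · have h1 : σ P = P := by rw [hP, hSσ, h, mul_one]
      have h2 : σ N = N := by rw [hN, hSσ, h, mul_one]
      exact ⟨by rw [map_add, h1, h2], by rw [_root_.map_mul, h1, h2]⟩
    · have h1 : σ P = N := by rw [hP, hSσ, h, one_mul]
      have h2 : σ N = P := by rw [hN, hSσ, h]; norm_num; rfl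
      exact ⟨by rw [map_add, h1, h2, add_comm], by rw [_root_.map_mul, h1, h2, mul_comm]⟩
  -- integrality
  have hMint : ∀ i j, IsIntegral ℤ (M i j) := by
    intro i j
    rw [hMapp]
    have hbi : IsIntegral ℤ (b i) := by
      rw [hb, integralBasis_apply]
      exact RingOfIntegers.isIntegral_coe (RingOfIntegers.basis K i)
    exact IsIntegral.map ((e j).toRingHom.toIntAlgHom) hbi
  have hSint : ∀ u, S u ∈ integralClosure ℤ E := fun u =>
    Subalgebra.sum_mem _ fun π _ => Subalgebra.prod_mem _ fun i _ => hMint _ _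
  -- P + N and P * N are rational integers
  have hmem : ∀ x : E, (∀ σ : E ≃ₐ[ℚ] E, σ x = x) → x ∈ integralClosure ℤ E →
      ∃ z : ℤ, algebraMap ℤ E z = x := by
    intro x hfix hint
    obtain ⟨q, hq⟩ := Algebra.mem_bot.mp (@fixed_mem_bot E _ _ _ (by
      have := @IsAlgClosure.normal ℚ (AlgebraicClosure ℚ) _ _ (AlgebraicClosure.instAlgebra ℚ) inferInstance
      convert this
      exact Subsingleton.elim _ _) x hfix)
    have hxint : IsIntegral ℤ x := hint
    rw [← hq] at hxint
    have hqint : IsIntegral ℤ q :=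
      (isIntegral_algebraMap_iff (algebraMap ℚ E).injective).mp hxint
    obtain ⟨z, hz⟩ := IsIntegrallyClosed.isIntegral_iff.mp hqint
    exact ⟨z, by rw [IsScalarTower.algebraMap_apply ℤ ℚ E, hz, hq]⟩
  obtain ⟨s, hs⟩ := hmem (P + N) (fun σ => (key σ).1)
    (Subalgebra.add_mem _ (hSint 1) (hSint (-1)))
  obtain ⟨t, ht⟩ := hmem (P * N) (fun σ => (key σ).2)
    (Subalgebra.mul_mem _ (hSint 1) (hSint (-1)))
  -- discr = s^2 - 4t
  have hfinal : algebraMap ℤ E (NumberField.discr K) = algebraMap ℤ E (s ^ 2 - 4 * t) := by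
    have h0 : algebraMap ℤ ℚ (NumberField.discr K) = (NumberField.discr K : ℚ) := by simp
    have h1 : algebraMap ℤ E (NumberField.discr K) = algebraMap ℚ E (Algebra.discr ℚ b) := by
      rw [IsScalarTower.algebraMap_apply ℤ ℚ E, h0, NumberField.coe_discr, hb]
    rw [h1, hdisc, hdet]
    have h2 : (P - N) ^ 2 = (P + N) ^ 2 - 4 * (P * N) := by ring
    rw [h2, ← hs, ← ht, map_sub, map_pow, _root_.map_mul]
    norm_num
  have hZ : NumberField.discr K = s ^ 2 - 4 * t :=
    (algebraMap ℤ E).injective_int hfinal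
  rcases Int.even_or_odd s with ⟨k, hk⟩ | ⟨k, hk⟩
  · left
    have : NumberField.discr K = 4 * (k * k - t) := by rw [hZ, hk]; ring
    omega
  · right
    have : NumberField.discr K = 4 * (k * k + k - t) + 1 := by rw [hZ, hk]; ring
    omega
end

section
/- Let A be a finite abelian group and S ⊆ A a generating subset. Let π : E → A be a surjective group homomorphism whose kernel is contained in the center of E and is isomorphic, as an abstract group, to ℚ/ℤ. Suppose that for every a ∈ S and every b ∈ A there exist lifts ã, b̃ ∈ E of a, b with ã·b̃ = b̃·ã. Then π admits a group-homomorphism section s : A → E with π ∘ s = id. -/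
/- Let `A` be a finite abelian group, `S ⊆ A` a generating subset, and
`π : E → A` a central extension of `A` whose kernel is isomorphic, as an abstract
group, to `ℚ/ℤ`.  If every `a ∈ S` and every `b ∈ A` admit commuting lifts in `E`,
then `π` splits: it has a group-homomorphism section. -/
theorem central_extension_splits_of_commuting_lifts_abelian
    (A E : Type*) [CommGroup A] [Finite A] [Group E]
    (S : Set A) (hS : Subgroup.closure S = ⊤)
    (π : E →* A) (hsurj : Function.Surjective π)
    (hcentral : π.ker ≤ Subgroup.center E)
    (hker : Nonempty (π.ker ≃* Multiplicative (ℚ ⧸ AddSubgroup.zmultiples (1 : ℚ))))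
    (hcomm : ∀ a ∈ S, ∀ b : A, ∃ ea eb : E, π ea = a ∧ π eb = b ∧ ea * eb = eb * ea) :
    ∃ s : A →* E, π.comp s = MonoidHom.id A := by
  classical
  -- Step 1: every lift of an element of `S` is central in `E`.
  have hZ : ∀ e : E, π e ∈ S → e ∈ Subgroup.center E := by
    intro e he
    rw [Subgroup.mem_center_iff]
    intro g
    obtain ⟨ea, eb, hea, heb, hc⟩ := hcomm (π e) he (π g)
    have hk1 : ea⁻¹ * e ∈ π.ker := by
      rw [MonoidHom.mem_ker, map_mul, map_inv, hea, inv_mul_cancel]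
    have hk2 : eb⁻¹ * g ∈ π.ker := by
      rw [MonoidHom.mem_ker, map_mul, map_inv, heb, inv_mul_cancel]
    have h1 := Subgroup.mem_center_iff.mp (hcentral hk1)
    have h2 := Subgroup.mem_center_iff.mp (hcentral hk2)
    have c1 : Commute ea eb := hc
    have key : Commute (ea * (ea⁻¹ * e)) (eb * (eb⁻¹ * g)) := by
      refine Commute.mul_left ?_ ?_
      · exact Commute.mul_right c1 (h2 ea)
      · exact Commute.mul_right ((h1 eb).symm) ((h1 (eb⁻¹ * g)).symm)
    have he' : ea * (ea⁻¹ * e) = e := by group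
    have hg' : eb * (eb⁻¹ * g) = g := by group
    rw [he', hg'] at key
    exact key.symm
  -- Step 2: the center maps onto all of `A`, hence `E` is abelian.
  have hStop : ∀ a : A, ∃ e ∈ Subgroup.center E, π e = a := by
    have hle : Subgroup.closure S ≤ (Subgroup.center E).map π := by
      apply Subgroup.closure_le _ |>.mpr
      intro a ha
      obtain ⟨e, he⟩ := hsurj a
      exact ⟨e, hZ e (he ▸ ha), he⟩
    intro a
    have : a ∈ (Subgroup.center E).map π := hle (hS ▸ Subgroup.mem_top a)
    simpa using this
  have hmul : ∀ e1 e2 : E, e1 * e2 = e2 * e1 := by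
    suffices h : ∀ e : E, e ∈ Subgroup.center E by
      intro e1 e2
      exact Subgroup.mem_center_iff.mp (h e2) e1
    intro e
    obtain ⟨c, hc, hπc⟩ := hStop (π e)
    have hk : c⁻¹ * e ∈ π.ker := by
      rw [MonoidHom.mem_ker, map_mul, map_inv, hπc, inv_mul_cancel]
    have : e = c * (c⁻¹ * e) := by group
    rw [this]
    exact Subgroup.mul_mem _ hc (hcentral hk)
  letI : CommGroup E := { (inferInstance : Group E) with mul_comm := hmul }
  -- Step 3: a retraction `E → π.ker` using injectivity (Baer criterion) of ℚ/ℤ.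
  obtain ⟨e0⟩ := hker
  haveI : DivisibleBy (ℚ ⧸ AddSubgroup.zmultiples (1 : ℚ)) ℤ :=
    inferInstanceAs (DivisibleBy (AddCircle (1 : ℚ)) ℤ)
  have baer : Module.Baer ℤ (ℚ ⧸ AddSubgroup.zmultiples (1 : ℚ)) :=
    Module.Baer.of_divisible _
  let i : Additive ↥π.ker →+ Additive E :=
    AddMonoidHom.mk' (fun k => Additive.ofMul (k.toMul : E)) (by intro x y; rfl)
  have hi : Function.Injective i := by
    intro x y h
    have hval : (x.toMul : E) = (y.toMul : E) := congrArg Additive.toMul h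
    exact congrArg Additive.ofMul (Subtype.ext hval)
  let f : Additive ↥π.ker →+ (ℚ ⧸ AddSubgroup.zmultiples (1 : ℚ)) :=
    AddMonoidHom.mk' (fun k => (e0 k.toMul).toAdd)
      (by intro x y; simp [toMul_add, map_mul, toAdd_mul])
  obtain ⟨g, hg⟩ := baer.extension_property_addMonoidHom i hi f
  let r : E → ↥π.ker := fun e => e0.symm (Multiplicative.ofAdd (g (Additive.ofMul e)))
  have hr_mul : ∀ e1 e2 : E, r (e1 * e2) = r e1 * r e2 := by
    intro e1 e2
    simp only [r, ofMul_mul, map_add, ofAdd_add, map_mul]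
  have hr_ker : ∀ k : ↥π.ker, r (k : E) = k := by
    intro k
    have hgk : g (i (Additive.ofMul k)) = f (Additive.ofMul k) := DFunLike.congr_fun hg _
    have : g (Additive.ofMul (k : E)) = (e0 k).toAdd := hgk
    simp only [r, this, ofAdd_toAdd, MulEquiv.symm_apply_apply]
  -- Step 4: build the section.
  let ρ : E → E := fun e => e * ((r e : E))⁻¹
  have hπρ : ∀ e, π (ρ e) = π e := by
    intro e
    have hm : (r e : E) ∈ π.ker := (r e).2
    simp [ρ, MonoidHom.mem_ker.mp hm]
  have hρ_ker : ∀ k, (hk : k ∈ π.ker) → ρ k = 1 := by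
    intro k hk
    have : r k = ⟨k, hk⟩ := hr_ker ⟨k, hk⟩
    simp [ρ, this]
  have hρ_mul : ∀ e1 e2, ρ (e1 * e2) = ρ e1 * ρ e2 := by
    intro e1 e2
    simp only [ρ, hr_mul, Subgroup.coe_mul, mul_inv]
    exact mul_mul_mul_comm e1 e2 _ _
  have hρ_congr : ∀ e1 e2, π e1 = π e2 → ρ e1 = ρ e2 := by
    intro e1 e2 h
    have hk : e1⁻¹ * e2 ∈ π.ker := by
      rw [MonoidHom.mem_ker, map_mul, map_inv, h, inv_mul_cancel]
    have he2 : e2 = e1 * (e1⁻¹ * e2) := by group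
    rw [he2, hρ_mul, hρ_ker _ hk, mul_one]
  choose σ hσ using hsurj
  refine ⟨{ toFun := fun a => ρ (σ a), map_one' := ?_, map_mul' := ?_ }, ?_⟩
  · have h1 : π (σ 1) = π (1 : E) := by rw [hσ, map_one]
    show ρ (σ 1) = 1
    rw [hρ_congr _ _ h1, hρ_ker 1 (one_mem _)]
  · intro a b
    have h1 : π (σ (a * b)) = π (σ a * σ b) := by rw [hσ, map_mul, hσ, hσ]
    show ρ (σ (a * b)) = ρ (σ a) * ρ (σ b)
    rw [hρ_congr _ _ h1, hρ_mul]
  · ext a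
    exact (hπρ (σ a)).trans (hσ a)
end

section
/- Let n ≥ 2 and let π : E → Sₙ be a surjective group homomorphism onto the symmetric group Sₙ whose kernel is contained in the center of E and is isomorphic, as an abstract group, to ℚ/ℤ. Suppose that for every transposition τ ∈ Sₙ and every σ ∈ Sₙ commuting with τ there exist lifts τ̃, σ̃ ∈ E of τ, σ with τ̃·σ̃ = σ̃·τ̃. Then π admits a group-homomorphism section s : Sₙ → E with π ∘ s = id. -/
open Equiv

private lemma sqc {G : Type*} [Group G] {x : G} (h : x * x = 1) (c : G) :
    x * (x * c) = c := by rw [← mul_assoc, h, one_mul]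

private lemma inv_eq_self_of_sq {G : Type*} [Group G] {x : G} (h : x * x = 1) : x⁻¹ = x :=
  inv_eq_of_mul_eq_one_right h

private lemma cube_of_braid {G : Type*} [Group G] {x y : G} (hx : x * x = 1) (hy : y * y = 1)
    (hb : x * y * x = y * x * y) : (x * y) * ((x * y) * (x * y)) = 1 := by
  calc (x * y) * ((x * y) * (x * y)) = x * ((y * x * y) * (x * y)) := by group
    _ = x * ((x * y * x) * (x * y)) := by rw [hb]
    _ = x * (x * (y * (x * (x * y)))) := by group
    _ = 1 := by rw [sqc hx, sqc hx, hy]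

private lemma braid_of_cube {G : Type*} [Group G] {x y : G} (hx : x * x = 1) (hy : y * y = 1)
    (hc : (x * y) * ((x * y) * (x * y)) = 1) : x * y * x = y * x * y := by
  have h2 : (y * x * y) * (y * x * y) = 1 := by
    have : (y * x * y) * (y * x * y) = y * (x * (y * (y * (x * y)))) := by group
    rw [this, sqc hy, sqc hx, hy]
  have h3 : (x * y * x) * (y * x * y) = 1 := by
    rw [← hc]; group
  calc x * y * x = (x * y * x) * ((y * x * y) * (y * x * y)) := by rw [h2, mul_one]
    _ = ((x * y * x) * (y * x * y)) * (y * x * y) := by group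
    _ = y * x * y := by rw [h3, one_mul]

private lemma swap_braid {α : Type*} [DecidableEq α] {x y z : α} (hxy : x ≠ y) (hyz : y ≠ z)
    (hxz : x ≠ z) :
    swap x y * swap y z * swap x y = swap y z * swap x y * swap y z := by
  have h1 : swap x y * swap y z * (swap x y)⁻¹ = swap x z := by
    rw [← swap_apply_apply, swap_apply_right, swap_apply_of_ne_of_ne hxz.symm hyz.symm]
  have h2 : swap y z * swap x y * (swap y z)⁻¹ = swap x z := by
    rw [← swap_apply_apply, swap_apply_of_ne_of_ne hxy hxz, swap_apply_left, swap_comm]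
  rw [swap_inv] at h1 h2
  rw [h1, ← h2]

private lemma swap_disj_comm {α : Type*} [DecidableEq α] {a b c d : α}
    (hca : c ≠ a) (hcb : c ≠ b) (hda : d ≠ a) (hdb : d ≠ b) :
    swap a b * swap c d = swap c d * swap a b := by
  have := Equiv.mul_swap_eq_swap_mul (swap a b) c d
  rwa [swap_apply_of_ne_of_ne hca hcb, swap_apply_of_ne_of_ne hda hdb] at this

private def tpAux {E : Type*} [Group E] (a : ℕ → E) : ℕ → ℕ → E
  | 0, _ => 1
  | (d+1), j => a j * tpAux a d (j+1)

private theorem aux_split {m : ℕ} {E : Type*} [Group E] (π : E →* Equiv.Perm (Fin (m+1)))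
    (a : ℕ → E)
    (ha2 : ∀ i, i + 1 ≤ m → a i * a i = 1)
    (haπ : ∀ i (h : i + 1 ≤ m), π (a i) = Equiv.swap ⟨i, by omega⟩ ⟨i+1, by omega⟩)
    (hbr : ∀ i, i + 2 ≤ m → a i * a (i+1) * a i = a (i+1) * a i * a (i+1))
    (hcm : ∀ i j, i + 2 ≤ j → j + 1 ≤ m → a i * a j = a j * a i) :
    ∃ s : Equiv.Perm (Fin (m+1)) →* E,
      π.comp s = MonoidHom.id (Equiv.Perm (Fin (m+1))) := by
  classical
  set K : ℕ → Subgroup E := fun k => Subgroup.closure (a '' Set.Iio k) with hK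
  set tp : ℕ → ℕ → E := fun j k => tpAux a (k+1-j) j with htp
  have mem_K : ∀ i k, i < k → a i ∈ K k := fun i k h =>
    Subgroup.subset_closure ⟨i, h, rfl⟩
  have tp_top : ∀ j k, k < j → tp j k = 1 := by
    intro j k h
    have : k + 1 - j = 0 := by omega
    simp [htp, this, tpAux]
  have tp_succ : ∀ j k, j ≤ k → tp j k = a j * tp (j+1) k := by
    intro j k h
    have h1 : k + 1 - j = (k - j) + 1 := by omega
    have h2 : k + 1 - (j+1) = k - j := by omega
    simp only [htp, h1, h2, tpAux]
  -- commuting past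
  have cpast : ∀ k, k + 1 ≤ m → ∀ i j, i + 2 ≤ j → a i * tp j k = tp j k * a i := by
    intro k hk i
    have : ∀ d j, k + 1 - j = d → i + 2 ≤ j → a i * tp j k = tp j k * a i := by
      intro d
      induction d with
      | zero =>
        intro j hd hij
        rw [tp_top j k (by omega)]; rw [mul_one, one_mul]
      | succ d ih =>
        intro j hd hij
        have hjk : j ≤ k := by omega
        rw [tp_succ j k hjk, ← mul_assoc, hcm i j hij (by omega), mul_assoc,
          ih (j+1) (by omega) (by omega), ← mul_assoc]
    exact fun j => this (k+1-j) j rfl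
  -- left shift
  have lshift : ∀ k, k + 1 ≤ m → ∀ i, i ≤ k → ∀ d j, j + d + 1 = i →
      a i * tp j k = tp j k * a (i-1) := by
    intro k hk i hik d
    induction d with
    | zero =>
      intro j hj
      have hji : j + 1 = i := by omega
      have h1 : tp j k = a j * (a (j+1) * tp (j+2) k) := by
        rw [tp_succ j k (by omega), tp_succ (j+1) k (by omega)]
      have hbrj := hbr j (by omega)
      have hcp : a j * tp (j+2) k = tp (j+2) k * a j := cpast k hk j (j+2) (by omega)
      have : i - 1 = j := by omega
      rw [this, ← hji, h1]
      calc a (j+1) * (a j * (a (j+1) * tp (j+2) k))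
          = (a (j+1) * a j * a (j+1)) * tp (j+2) k := by group
        _ = (a j * a (j+1) * a j) * tp (j+2) k := by rw [← hbrj]
        _ = a j * (a (j+1) * (a j * tp (j+2) k)) := by group
        _ = a j * (a (j+1) * (tp (j+2) k * a j)) := by rw [hcp]
        _ = (a j * (a (j+1) * tp (j+2) k)) * a j := by group
    | succ d ih =>
      intro j hj
      have hjk : j ≤ k := by omega
      rw [tp_succ j k hjk, ← mul_assoc, ← hcm j i (by omega) (by omega), mul_assoc,
        ih (j+1) (by omega), ← mul_assoc]
  -- absorption
  have absorb : ∀ k, k + 1 ≤ m → ∀ i, i ≤ k → ∀ j, j ≤ k + 1 →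
      ∃ j' ≤ k + 1, ∃ h ∈ K k, a i * tp j k = tp j' k * h := by
    intro k hk i hi j hj
    rcases Nat.lt_or_ge j (k+1) with hjk | hjk
    · -- j ≤ k
      have hjk' : j ≤ k := by omega
      rcases Nat.lt_or_ge (i+1) j with h1 | h1
      · -- i + 2 ≤ j
        exact ⟨j, hj, a i, mem_K i k (by omega), cpast k hk i j (by omega)⟩
      · rcases Nat.eq_or_lt_of_le h1 with h2 | h2
        · -- i + 1 = j
          refine ⟨i, by omega, 1, one_mem _, ?_⟩
          rw [mul_one, h2, ← tp_succ i k (by omega)]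
        · rcases Nat.eq_or_lt_of_le (Nat.lt_succ_iff.mp h2) with h3 | h3
          · -- i = j
            refine ⟨j+1, by omega, 1, one_mem _, ?_⟩
            rw [mul_one, tp_succ j k hjk', ← h3, sqc (ha2 j (by omega))]
          · -- j < i
            refine ⟨j, hj, a (i-1), mem_K (i-1) k (by omega), ?_⟩
            exact lshift k hk i hi (i - j - 1) j (by omega)
    · -- j = k + 1
      have hj1 : tp j k = 1 := tp_top j k (by omega)
      rcases Nat.eq_or_lt_of_le hi with h1 | h1
      · -- i = k
        refine ⟨k, by omega, 1, one_mem _, ?_⟩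
        rw [hj1, mul_one, mul_one, tp_succ k k le_rfl, tp_top (k+1) k (by omega), mul_one, h1]
      · -- i < k
        refine ⟨j, hj, a i, mem_K i k h1, ?_⟩
        rw [hj1, mul_one, one_mul]
  -- covering
  have cover : ∀ k, k + 1 ≤ m → ∀ x ∈ K (k+1), ∃ j ≤ k + 1, ∃ h ∈ K k, x = tp j k * h := by
    intro k hk x hx
    set S : Set E := {x | ∃ j ≤ k + 1, ∃ h ∈ K k, x = tp j k * h} with hS
    have h1S : (1:E) ∈ S := ⟨k+1, le_rfl, 1, one_mem _, by
      rw [tp_top (k+1) k (by omega), mul_one]⟩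
    have hgen : ∀ i, i ≤ k → ∀ y ∈ S, a i * y ∈ S := by
      rintro i hi y ⟨j, hj, h, hh, rfl⟩
      obtain ⟨j', hj', h', hh', he⟩ := absorb k hk i hi j hj
      exact ⟨j', hj', h' * h, mul_mem hh' hh, by rw [← mul_assoc, he, mul_assoc]⟩
    set P : Subgroup E :=
      { carrier := {g | ∀ y ∈ S, g * y ∈ S ∧ g⁻¹ * y ∈ S}
        one_mem' := by intro y hy; simp only [one_mul, inv_one]; exact ⟨hy, hy⟩
        mul_mem' := by
          intro g h hg hh y hy
          constructor
          · rw [mul_assoc]; exact (hg _ (hh y hy).1).1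
          · rw [mul_inv_rev, mul_assoc]; exact (hh _ (hg y hy).2).2
        inv_mem' := by
          intro g hg y hy
          rw [inv_inv]
          exact ⟨(hg y hy).2, (hg y hy).1⟩ } with hP
    have hKP : K (k+1) ≤ P := by
      rw [hK]
      apply Subgroup.closure_le P |>.mpr
      rintro g ⟨i, hi, rfl⟩
      simp only [Set.mem_Iio] at hi
      have hik : i ≤ k := by omega
      intro y hy
      refine ⟨hgen i hik y hy, ?_⟩
      rw [inv_eq_self_of_sq (ha2 i (by omega))]
      exact hgen i hik y hy
    have := (hKP hx 1 h1S).1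
    rwa [mul_one] at this
  -- fixed points
  have fixes : ∀ k, k ≤ m → ∀ x ∈ K k, ∀ q : Fin (m+1), k < q.val → π x q = q := by
    intro k hk x hx
    induction hx using Subgroup.closure_induction with
    | mem g hg =>
      obtain ⟨i, hi, rfl⟩ := hg
      simp only [Set.mem_Iio] at hi
      intro q hq
      rw [haπ i (by omega)]
      apply swap_apply_of_ne_of_ne
      · exact Fin.ne_of_val_ne (show q.val ≠ i by omega)
      · exact Fin.ne_of_val_ne (show q.val ≠ i + 1 by omega)
    | one => intro q hq; simp
    | mul x y hx hy ihx ihy =>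
      intro q hq
      rw [map_mul, Equiv.Perm.mul_apply, ihy q hq, ihx q hq]
    | inv x hx ihx =>
      intro q hq
      rw [map_inv]
      exact Equiv.Perm.inv_eq_iff_eq.mpr (ihx q hq).symm
  -- value of tp at the point k+1
  have tpval : ∀ k (hk : k + 1 ≤ m) (d j : ℕ) (_ : k + 1 - j = d) (_ : j ≤ k + 1),
      π (tp j k) ⟨k+1, by omega⟩ = ⟨j, by omega⟩ := by
    intro k hk d
    induction d with
    | zero =>
      intro j hd hj
      have hj' : j = k + 1 := by omega
      subst hj'
      rw [tp_top (k+1) k (by omega)]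
      simp
    | succ d ih =>
      intro j hd hj
      have hjk : j ≤ k := by omega
      rw [tp_succ j k hjk, map_mul, Equiv.Perm.mul_apply,
        ih (j+1) (by omega) (by omega), haπ j (by omega)]
      exact swap_apply_right _ _
  -- injectivity
  have inj : ∀ k, k ≤ m → ∀ x ∈ K k, π x = 1 → x = 1 := by
    intro k
    induction k with
    | zero =>
      intro hk x hx _
      have : K 0 = ⊥ := by
        rw [hK]
        simp [Subgroup.closure_eq_bot_iff]
      rw [this] at hx
      exact Subgroup.mem_bot.mp hx
    | succ k ih =>
      intro hk x hx hπx
      obtain ⟨j, hj, h, hh, rfl⟩ := cover k hk x hx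
      have hfix : π h ⟨k+1, by omega⟩ = ⟨k+1, by omega⟩ :=
        fixes k (by omega) h hh _ (by simp)
      have hval : π (tp j k * h) ⟨k+1, by omega⟩ = ⟨j, by omega⟩ := by
        rw [map_mul, Equiv.Perm.mul_apply, hfix, tpval k hk (k+1-j) j rfl hj]
      rw [hπx] at hval
      simp only [Equiv.Perm.one_apply, Fin.mk.injEq] at hval
      have hj1 : j = k + 1 := by omega
      subst hj1
      rw [tp_top (k+1) k (by omega), one_mul] at hπx ⊢
      exact ih (by omega) h hh hπx
  -- surjectivity
  have hsur : ∀ σ : Equiv.Perm (Fin (m+1)), ∃ x ∈ K m, π x = σ := by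
    intro σ
    have hσ : σ ∈ Submonoid.closure
        (Set.range fun i : Fin m => Equiv.swap i.castSucc i.succ) := by
      rw [Equiv.Perm.mclosure_swap_castSucc_succ]
      trivial
    induction hσ using Submonoid.closure_induction with
    | mem g hg =>
      obtain ⟨i, rfl⟩ := hg
      refine ⟨a i.val, mem_K i.val m i.isLt, ?_⟩
      rw [haπ i.val (by omega)]
      congr 1
    | one => exact ⟨1, one_mem _, map_one π⟩
    | mul x y _ _ ihx ihy =>
      obtain ⟨u, hu, hup⟩ := ihx
      obtain ⟨v, hv, hvp⟩ := ihy
      exact ⟨u * v, mul_mem hu hv, by rw [map_mul, hup, hvp]⟩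
  -- conclusion
  set φ : K m →* Equiv.Perm (Fin (m+1)) := π.comp (K m).subtype with hφ
  have hinj : Function.Injective φ := by
    apply (injective_iff_map_eq_one φ).mpr
    intro x hx
    exact Subtype.ext (inj m le_rfl x.1 x.2 hx)
  have hsur' : Function.Surjective φ := by
    intro σ
    obtain ⟨x, hx, hxp⟩ := hsur σ
    exact ⟨⟨x, hx⟩, hxp⟩
  let e := MulEquiv.ofBijective φ ⟨hinj, hsur'⟩
  refine ⟨((K m).subtype).comp e.symm.toMonoidHom, MonoidHom.ext fun σ => ?_⟩
  exact e.apply_symm_apply σ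


/- Let `n ≥ 2` and let `π : E → Sₙ` be a central extension of the symmetric group
`Sₙ` whose kernel is isomorphic, as an abstract group, to `ℚ/ℤ`.  If every
transposition `τ` and every `σ` commuting with `τ` admit commuting lifts in `E`,
then `π` splits: it has a group-homomorphism section. -/
theorem central_extension_splits_of_commuting_lifts_symmetric
    (n : ℕ) (hn : 2 ≤ n) (E : Type*) [Group E]
    (π : E →* Equiv.Perm (Fin n)) (hsurj : Function.Surjective π)
    (hcentral : π.ker ≤ Subgroup.center E)
    (hker : Nonempty (π.ker ≃* Multiplicative (ℚ ⧸ AddSubgroup.zmultiples (1 : ℚ))))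
    (hcomm : ∀ τ σ : Equiv.Perm (Fin n), τ.IsSwap → τ * σ = σ * τ →
      ∃ et es : E, π et = τ ∧ π es = σ ∧ et * es = es * et) :
    ∃ s : Equiv.Perm (Fin n) →* E, π.comp s = MonoidHom.id (Equiv.Perm (Fin n)) := by
  classical
  obtain ⟨m, rfl⟩ : ∃ m, n = m + 1 := ⟨n - 1, by omega⟩
  have hm : 1 ≤ m := by omega
  obtain ⟨e⟩ := hker
  -- square roots in the kernel
  have sqrt : ∀ x : E, π x = 1 → ∃ y : E, π y = 1 ∧ y * y = x := by
    intro x hx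
    have hxk : x ∈ π.ker := MonoidHom.mem_ker.mpr hx
    obtain ⟨r, hr⟩ := QuotientAddGroup.mk_surjective (Multiplicative.toAdd (e ⟨x, hxk⟩))
    set y' := e.symm (Multiplicative.ofAdd (QuotientAddGroup.mk (r/2)))
    have hy : y' * y' = ⟨x, hxk⟩ := by
      rw [← map_mul, ← ofAdd_add, ← QuotientAddGroup.mk_add, add_halves, hr, ofAdd_toAdd,
        MulEquiv.symm_apply_apply]
    exact ⟨(y' : E), MonoidHom.mem_ker.mp y'.2, by rw [← Subgroup.coe_mul, hy]⟩
  -- centrality of the kernel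
  have hc : ∀ u : E, π u = 1 → ∀ g : E, u * g = g * u := by
    intro u hu g
    exact (Subgroup.mem_center_iff.mp (hcentral (MonoidHom.mem_ker.mpr hu)) g).symm
  -- commutation only depends on the images
  have clift : ∀ x y x' y' : E, π x' = π x → π y' = π y → x * y = y * x →
      x' * y' = y' * x' := by
    intro x y x' y' hx hy hxy
    obtain ⟨u, hu, hx'⟩ : ∃ u, π u = 1 ∧ x' = x * u :=
      ⟨x⁻¹ * x', by rw [map_mul, map_inv, hx, inv_mul_cancel], by rw [mul_inv_cancel_left]⟩
    obtain ⟨v, hv, hy'⟩ : ∃ v, π v = 1 ∧ y' = y * v :=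
      ⟨y⁻¹ * y', by rw [map_mul, map_inv, hy, inv_mul_cancel], by rw [mul_inv_cancel_left]⟩
    calc x' * y' = (x * u) * (y * v) := by rw [← hx', ← hy']
      _ = x * ((u * y) * v) := by group
      _ = x * ((y * u) * v) := by rw [hc u hu y]
      _ = (x * y) * (u * v) := by group
      _ = (y * x) * (u * v) := by rw [hxy]
      _ = y * (x * (u * v)) := by rw [mul_assoc]
      _ = y * (v * (x * u)) := by rw [hc v hv (x * u), mul_assoc]
      _ = (y * v) * (x * u) := by rw [← mul_assoc]
      _ = y' * x' := by rw [← hx', ← hy']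
  -- adjacent transpositions
  set sw : ℕ → Equiv.Perm (Fin (m+1)) := fun i =>
    if h : i + 1 ≤ m then Equiv.swap ⟨i, by omega⟩ ⟨i+1, by omega⟩ else 1 with hsw
  have hsw_eq : ∀ i (h : i + 1 ≤ m),
      sw i = Equiv.swap ⟨i, by omega⟩ ⟨i+1, by omega⟩ := by
    intro i h
    rw [hsw]
    exact dif_pos h
  have hsw2 : ∀ i, sw i * sw i = 1 := by
    intro i
    rw [hsw]
    dsimp only
    split
    · exact Equiv.swap_mul_self _ _
    · exact one_mul 1
  set b : ℕ → E := fun i => Function.surjInv hsurj (sw i) with hb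
  have hbπ : ∀ i, π (b i) = sw i := fun i => Function.surjInv_eq hsurj (sw i)
  have hbb : ∀ i, π (b i * b i) = 1 := fun i => by rw [map_mul, hbπ, hsw2]
  choose y hy1 hy2 using fun i => sqrt (b i * b i) (hbb i)
  set a0 : ℕ → E := fun i => b i * (y i)⁻¹ with ha0
  have hy1' : ∀ i, π ((y i)⁻¹) = 1 := fun i => by rw [map_inv, hy1, inv_one]
  have ha0π : ∀ i, π (a0 i) = sw i := by
    intro i
    rw [ha0]
    dsimp only
    rw [map_mul, hbπ, hy1', mul_one]
  have ha0sq : ∀ i, a0 i * a0 i = 1 := by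
    intro i
    rw [ha0]
    dsimp only
    calc b i * (y i)⁻¹ * (b i * (y i)⁻¹)
        = b i * ((y i)⁻¹ * b i) * (y i)⁻¹ := by group
      _ = b i * (b i * (y i)⁻¹) * (y i)⁻¹ := by rw [hc _ (hy1' i) (b i)]
      _ = (b i * b i) * ((y i)⁻¹ * (y i)⁻¹) := by group
      _ = (y i * y i) * ((y i)⁻¹ * (y i)⁻¹) := by rw [← hy2]
      _ = 1 := by group
  -- distant generators commute
  have ha0cm : ∀ i j, i + 2 ≤ j → j + 1 ≤ m → a0 i * a0 j = a0 j * a0 i := by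
    intro i j hij hjm
    have him : i + 1 ≤ m := by omega
    have hτ : (sw i).IsSwap :=
      ⟨_, _, Fin.ne_of_val_ne (show (i:ℕ) ≠ i + 1 by omega), hsw_eq i him⟩
    have hcomm' : sw i * sw j = sw j * sw i := by
      rw [hsw_eq i him, hsw_eq j hjm]
      exact swap_disj_comm (Fin.ne_of_val_ne (show (j:ℕ) ≠ i by omega))
        (Fin.ne_of_val_ne (show (j:ℕ) ≠ i + 1 by omega))
        (Fin.ne_of_val_ne (show (j+1:ℕ) ≠ i by omega))
        (Fin.ne_of_val_ne (show (j+1:ℕ) ≠ i + 1 by omega))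
    obtain ⟨et, es, het, hes, hco⟩ := hcomm (sw i) (sw j) hτ hcomm'
    exact clift et es (a0 i) (a0 j) (by rw [ha0π, het]) (by rw [ha0π, hes]) hco
  -- braid relation for the transpositions
  have hswbr : ∀ i, i + 2 ≤ m → sw i * sw (i+1) * sw i = sw (i+1) * sw i * sw (i+1) := by
    intro i h
    rw [hsw_eq i (by omega), hsw_eq (i+1) (by omega)]
    exact swap_braid (Fin.ne_of_val_ne (show (i:ℕ) ≠ i + 1 by omega))
      (Fin.ne_of_val_ne (show (i+1:ℕ) ≠ i + 2 by omega))
      (Fin.ne_of_val_ne (show (i:ℕ) ≠ i + 2 by omega))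
  -- obstruction elements
  set z : ℕ → E := fun i =>
    if i + 2 ≤ m then
      (a0 i * a0 (i+1)) * ((a0 i * a0 (i+1)) * (a0 i * a0 (i+1)))
    else 1 with hz
  have hzker : ∀ i, π (z i) = 1 := by
    intro i
    rw [hz]
    dsimp only
    split
    · rename_i h
      simp only [map_mul, ha0π]
      exact cube_of_braid (hsw2 i) (hsw2 (i+1)) (hswbr i h)
    · exact map_one π
  have hz2 : ∀ i, z i * z i = 1 := by
    intro i
    rcases Nat.lt_or_ge m (i+2) with h | h
    · rw [hz]
      dsimp only
      rw [if_neg (by omega)]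
      exact one_mul 1
    · have hx : a0 i * a0 i = 1 := ha0sq i
      have hyy : a0 (i+1) * a0 (i+1) = 1 := ha0sq (i+1)
      set x := a0 i
      set yy := a0 (i+1)
      have hzeq : z i = (x*yy*x) * (yy*x*yy) := by
        rw [hz]
        dsimp only
        rw [if_pos h]
        simp only [mul_assoc]; rfl
      have hcsq : (x*yy*x) * (x*yy*x) = 1 := by
        calc (x*yy*x)*(x*yy*x) = x*(yy*(x*(x*(yy*x)))) := by group
          _ = 1 := by rw [sqc hx, sqc hyy, hx]
      have hdsq : (yy*x*yy) * (yy*x*yy) = 1 := by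
        calc (yy*x*yy)*(yy*x*yy) = yy*(x*(yy*(yy*(x*yy)))) := by group
          _ = 1 := by rw [sqc hyy, sqc hx, hyy]
      have h2 : (x*yy*x) * z i * (x*yy*x) = z i := by
        rw [mul_assoc, hc (z i) (hzker i) (x*yy*x), sqc hcsq]
      have h1 : (x*yy*x) * z i * (x*yy*x) = (yy*x*yy) * (x*yy*x) := by
        rw [hzeq]
        calc (x*yy*x) * ((x*yy*x) * (yy*x*yy)) * (x*yy*x)
            = ((x*yy*x)*(x*yy*x)) * ((yy*x*yy)*(x*yy*x)) := by group
          _ = (yy*x*yy)*(x*yy*x) := by rw [hcsq, one_mul]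
      have hdc : (yy*x*yy) * (x*yy*x) = z i := by rw [← h1, h2]
      calc z i * z i
          = ((x*yy*x)*(yy*x*yy)) * ((yy*x*yy)*(x*yy*x)) := by rw [← hzeq, ← hdc]
        _ = (x*yy*x) * (((yy*x*yy)*(yy*x*yy)) * (x*yy*x)) := by group
        _ = 1 := by rw [hdsq, one_mul, hcsq]
  -- correcting central elements
  set w : ℕ → E := fun k => Nat.rec 1 (fun k wk => wk * z k) k with hw
  have hwsucc : ∀ k, w (k+1) = w k * z k := fun k => rfl
  have hwker : ∀ k, π (w k) = 1 := by
    intro k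
    induction k with
    | zero => exact map_one π
    | succ k ih => rw [hwsucc k, map_mul, ih, hzker, mul_one]
  have hw2 : ∀ k, w k * w k = 1 := by
    intro k
    induction k with
    | zero => exact one_mul 1
    | succ k ih =>
      rw [hwsucc k]
      calc (w k * z k) * (w k * z k) = w k * ((z k * w k) * z k) := by group
        _ = w k * ((w k * z k) * z k) := by rw [hc (z k) (hzker k) (w k)]
        _ = (w k * w k) * (z k * z k) := by group
        _ = 1 := by rw [ih, hz2, one_mul]
  -- the corrected lifts
  set a : ℕ → E := fun i => a0 i * w i with ha
  have haπ' : ∀ i, π (a i) = sw i := by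
    intro i
    rw [ha]
    dsimp only
    rw [map_mul, hwker, mul_one, ha0π]
  have haπ : ∀ i (h : i + 1 ≤ m),
      π (a i) = Equiv.swap ⟨i, by omega⟩ ⟨i+1, by omega⟩ := by
    intro i h
    rw [haπ' i, hsw_eq i h]
  have ha2 : ∀ i, i + 1 ≤ m → a i * a i = 1 := by
    intro i _
    rw [ha]
    dsimp only
    calc a0 i * w i * (a0 i * w i) = a0 i * ((w i * a0 i) * w i) := by group
      _ = a0 i * ((a0 i * w i) * w i) := by rw [hc (w i) (hwker i) (a0 i)]
      _ = (a0 i * a0 i) * (w i * w i) := by group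
      _ = 1 := by rw [ha0sq, hw2, one_mul]
  have hacm : ∀ i j, i + 2 ≤ j → j + 1 ≤ m → a i * a j = a j * a i := by
    intro i j hij hjm
    exact clift (a0 i) (a0 j) (a i) (a j) (by rw [haπ' i, ha0π i])
      (by rw [haπ' j, ha0π j]) (ha0cm i j hij hjm)
  have habr : ∀ i, i + 2 ≤ m → a i * a (i+1) * a i = a (i+1) * a i * a (i+1) := by
    intro i h
    have hzswap : ∀ u v : E, z i * (u * v) = u * (z i * v) := by
      intro u v
      rw [← mul_assoc, hc (z i) (hzker i) u, mul_assoc]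
    have h1 : a i * a (i+1) = (a0 i * a0 (i+1)) * z i := by
      rw [ha]
      dsimp only
      calc a0 i * w i * (a0 (i+1) * w (i+1))
          = a0 i * ((w i * a0 (i+1)) * w (i+1)) := by group
        _ = a0 i * ((a0 (i+1) * w i) * w (i+1)) := by rw [hc (w i) (hwker i) (a0 (i+1))]
        _ = (a0 i * a0 (i+1)) * (w i * (w i * z i)) := by rw [hwsucc i]; group
        _ = (a0 i * a0 (i+1)) * z i := by rw [sqc (hw2 i)]
    have hg3 : (a0 i * a0 (i+1)) * ((a0 i * a0 (i+1)) * (a0 i * a0 (i+1))) = z i := by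
      rw [hz]
      dsimp only
      rw [if_pos h]
    have hcube : (a i * a (i+1)) * ((a i * a (i+1)) * (a i * a (i+1))) = 1 := by
      set g := a0 i * a0 (i+1) with hg
      rw [h1]
      calc (g * z i) * ((g * z i) * (g * z i))
          = g * (z i * (g * (z i * (g * z i)))) := by group
        _ = g * (g * (z i * (z i * (g * z i)))) := by rw [hzswap g (z i * (g * z i))]
        _ = g * (g * (z i * (g * (z i * z i)))) := by rw [hzswap g (z i)]
        _ = g * (g * (g * (z i * (z i * z i)))) := by rw [hzswap g (z i * z i)]
        _ = (g * (g * g)) * (z i * (z i * z i)) := by group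
        _ = z i * (z i * (z i * z i)) := by rw [hg3]
        _ = 1 := by rw [sqc (hz2 i), hz2 i]
    exact braid_of_cube (ha2 i (by omega)) (ha2 (i+1) (by omega)) hcube
  obtain ⟨s, hs⟩ := aux_split π a ha2 haπ habr hacm
  exact ⟨s, hs⟩
end

section
/- Let m ≥ 1 and let D_m denote the dihedral group of order 2m, with its rotation subgroup of index 2; call the elements outside the rotation subgroup reflections. Let π : E → D_m be a surjective group homomorphism whose kernel is contained in the center of E and is isomorphic, as an abstract group, to ℚ/ℤ. Suppose there is a reflection r₀ ∈ D_m such that for every reflection r conjugate to r₀ and every h ∈ D_m commuting with r there exist lifts r̃, h̃ ∈ E of r, h with r̃·h̃ = h̃·r̃. Then π admits a group-homomorphism section s : D_m → E with π ∘ s = id. -/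
private lemma srInvAux {n : ℕ} (i : ZMod n) :
    (DihedralGroup.sr i)⁻¹ = DihedralGroup.sr i := by
  apply inv_eq_of_mul_eq_one_right
  simp [DihedralGroup.one_def, -DihedralGroup.r_zero]

private lemma QZaux_div (x : ℚ ⧸ AddSubgroup.zmultiples (1 : ℚ)) (k : ℕ) (hk : 0 < k) :
    ∃ y, k • y = x := by
  obtain ⟨q, rfl⟩ := QuotientAddGroup.mk_surjective x
  refine ⟨QuotientAddGroup.mk (q / k), ?_⟩
  rw [← QuotientAddGroup.mk_nsmul]
  congr 1
  rw [nsmul_eq_mul]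
  have hk0 : (k : ℚ) ≠ 0 := by exact_mod_cast hk.ne'
  field_simp

private lemma QZaux_half (x : ℚ ⧸ AddSubgroup.zmultiples (1 : ℚ)) (n : ℕ) (hx : n • x = 0) :
    ∃ y, 2 • y = x ∧ (2 * n) • y = 0 := by
  obtain ⟨q, rfl⟩ := QuotientAddGroup.mk_surjective x
  refine ⟨QuotientAddGroup.mk (q / 2), ?_, ?_⟩
  · rw [← QuotientAddGroup.mk_nsmul]
    congr 1
    ring
  · rw [← QuotientAddGroup.mk_nsmul]
    rw [← QuotientAddGroup.mk_nsmul] at hx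
    convert hx using 2
    ring

/- Let `m ≥ 1` and let `π : E → D_m` be a central extension of the dihedral group
of order `2m` whose kernel is isomorphic, as an abstract group, to `ℚ/ℤ`.
The reflections of `D_m` are the elements `sr i` (those outside the rotation
subgroup).  If there is a reflection `sr r₀` such that every reflection `r`
conjugate to it and every `h` commuting with `r` admit commuting lifts in `E`,
then `π` splits: it has a group-homomorphism section. -/
theorem central_extension_splits_of_commuting_lifts_dihedral
    (m : ℕ) (hm : 1 ≤ m) (E : Type*) [Group E]
    (π : E →* DihedralGroup m) (hsurj : Function.Surjective π)
    (hcentral : π.ker ≤ Subgroup.center E)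
    (hker : Nonempty (π.ker ≃* Multiplicative (ℚ ⧸ AddSubgroup.zmultiples (1 : ℚ))))
    (r₀ : ZMod m)
    (hcomm : ∀ r h : DihedralGroup m, (∃ i : ZMod m, r = DihedralGroup.sr i) →
      IsConj (DihedralGroup.sr r₀) r → r * h = h * r →
      ∃ er eh : E, π er = r ∧ π eh = h ∧ er * eh = eh * er) :
    ∃ s : DihedralGroup m →* E, π.comp s = MonoidHom.id (DihedralGroup m) := by
  haveI : NeZero m := ⟨by omega⟩
  obtain ⟨e⟩ := hker
  -- all kernel elements are central
  have hcen : ∀ z : π.ker, ∀ x : E, x * (z : E) = (z : E) * x := by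
    intro z x
    exact Subgroup.mem_center_iff.mp (hcentral z.2) x
  -- divisibility of the kernel
  have div : ∀ (c : π.ker) (k : ℕ), 0 < k → ∃ w : π.ker, w ^ k = c := by
    intro c k hk
    obtain ⟨y, hy⟩ := QZaux_div (Multiplicative.toAdd (e c)) k hk
    refine ⟨e.symm (Multiplicative.ofAdd y), ?_⟩
    apply e.injective
    rw [map_pow, e.apply_symm_apply, ← ofAdd_nsmul, hy, ofAdd_toAdd]
  -- torsion square roots in the kernel
  have root : ∀ (c : π.ker) (n : ℕ), c ^ n = 1 →
      ∃ u : π.ker, u ^ 2 = c ∧ u ^ (2 * n) = 1 := by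
    intro c n hc
    have hx : n • Multiplicative.toAdd (e c) = 0 := by
      have := congrArg (fun t => Multiplicative.toAdd (e t)) hc
      simpa [map_pow, toAdd_pow] using this
    obtain ⟨y, hy1, hy2⟩ := QZaux_half (Multiplicative.toAdd (e c)) n hx
    refine ⟨e.symm (Multiplicative.ofAdd y), ?_, ?_⟩
    · apply e.injective
      rw [map_pow, e.apply_symm_apply, ← ofAdd_nsmul, hy1, ofAdd_toAdd]
    · apply e.injective
      rw [map_pow, e.apply_symm_apply, ← ofAdd_nsmul, hy2, map_one]
      rfl
  -- construct a lift a of r 1 with a ^ m = 1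
  obtain ⟨a₀, ha₀⟩ := hsurj (DihedralGroup.r 1)
  have ham : a₀ ^ m ∈ π.ker := by
    rw [MonoidHom.mem_ker, map_pow, ha₀, DihedralGroup.r_one_pow]
    simp [DihedralGroup.one_def, -DihedralGroup.r_zero]
  obtain ⟨w, hw⟩ := div ⟨a₀ ^ m, ham⟩ m hm
  have hwE : (w : E) ^ m = a₀ ^ m := by
    have := congrArg (Subtype.val) hw
    simpa using this
  set a : E := a₀ * (w : E)⁻¹ with ha_def
  have hacomm : Commute a₀ ((w : E)⁻¹) := by
    have h1 : Commute a₀ (w : E) := hcen w a₀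
    exact h1.inv_right
  have ham1 : a ^ m = 1 := by
    rw [ha_def, hacomm.mul_pow, inv_pow, hwE]
    group
  have haπ : π a = DihedralGroup.r 1 := by
    have hw1 : π (w : E) = 1 := w.2
    rw [ha_def, map_mul, map_inv, hw1, ha₀]
    group
  -- construct a lift b of sr r₀ with b * b = 1 and b * a * b⁻¹ = a⁻¹ * z₀
  obtain ⟨b₀, hb₀⟩ := hsurj (DihedralGroup.sr r₀)
  have hz₀mem : a * (b₀ * a * b₀⁻¹) ∈ π.ker := by
    rw [MonoidHom.mem_ker]
    simp only [map_mul, map_inv, ha₀, hb₀, haπ, srInvAux]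
    simp [DihedralGroup.one_def, -DihedralGroup.r_zero]
  set zk : π.ker := ⟨a * (b₀ * a * b₀⁻¹), hz₀mem⟩ with hzk_def
  have hconj₀ : b₀ * a * b₀⁻¹ = a⁻¹ * (zk : E) := by
    show b₀ * a * b₀⁻¹ = a⁻¹ * (a * (b₀ * a * b₀⁻¹))
    group
  -- z has order dividing m
  have hconjpow : ∀ (x y : E) (k : ℕ), (x * y * x⁻¹) ^ k = x * y ^ k * x⁻¹ := by
    intro x y k
    have := map_pow (MulAut.conj x) y k
    simpa [MulAut.conj_apply] using this
  have hzmE : (zk : E) ^ m = 1 := by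
    have h1 : (b₀ * a * b₀⁻¹) ^ m = 1 := by
      rw [hconjpow, ham1]
      group
    have h2 : Commute a⁻¹ (zk : E) := hcen zk a⁻¹
    rw [hconj₀, h2.mul_pow, inv_pow, ham1] at h1
    simpa using h1
  have hzm : zk ^ m = 1 := by
    apply Subtype.ext
    simpa using hzmE
  -- fix the square of the lift of sr r₀
  have hb₀sq : b₀ * b₀ ∈ π.ker := by
    rw [MonoidHom.mem_ker, map_mul, hb₀]
    simp [DihedralGroup.one_def, -DihedralGroup.r_zero]
  obtain ⟨w2, hw2⟩ := div ⟨b₀ * b₀, hb₀sq⟩ 2 (by norm_num)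
  have hw2E : (w2 : E) * (w2 : E) = b₀ * b₀ := by
    have := congrArg Subtype.val hw2
    simpa [pow_two] using this
  set b : E := b₀ * (w2 : E)⁻¹ with hb_def
  have hbπ : π b = DihedralGroup.sr r₀ := by
    have hw1 : π (w2 : E) = 1 := w2.2
    rw [hb_def, map_mul, map_inv, hw1, hb₀]
    group
  have hcb : Commute b₀ (w2 : E) := hcen w2 b₀
  have hb2 : b * b = 1 := by
    have h1 : (w2 : E)⁻¹ * b₀ = b₀ * (w2 : E)⁻¹ := (hcb.inv_right).symm.eq
    have h2 : b * b = b₀ * b₀ * ((w2 : E)⁻¹ * (w2 : E)⁻¹) := by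
      rw [hb_def, show b₀ * (w2 : E)⁻¹ * (b₀ * (w2 : E)⁻¹)
          = b₀ * ((w2 : E)⁻¹ * b₀) * (w2 : E)⁻¹ by group, h1]
      group
    rw [h2, ← hw2E]
    group
  have hconj : b * a * b⁻¹ = a⁻¹ * (zk : E) := by
    have hca : Commute a (w2 : E) := hcen w2 a
    have h1 : (w2 : E)⁻¹ * a * (w2 : E) = a := by
      rw [mul_assoc, hca.eq, ← mul_assoc, inv_mul_cancel, one_mul]
    calc b * a * b⁻¹ = b₀ * ((w2 : E)⁻¹ * a * (w2 : E)) * b₀⁻¹ := by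
            rw [hb_def]; group
      _ = b₀ * a * b₀⁻¹ := by rw [h1]
      _ = a⁻¹ * (zk : E) := hconj₀
  have hbinv : b⁻¹ = b := inv_eq_of_mul_eq_one_right hb2
  -- obtain the square root u of zk⁻¹ with u ^ m = 1
  obtain ⟨u, hu2, hum⟩ : ∃ u : π.ker, u ^ 2 = zk⁻¹ ∧ u ^ m = 1 := by
    rcases Nat.even_or_odd m with ⟨n, hn⟩ | hodd
    · -- even case : use the commuting-lifts hypothesis
      have hn1 : 0 < n := by omega
      have hnn : (n : ZMod m) + (n : ZMod m) = 0 := by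
        rw [← Nat.cast_add, ← hn, ZMod.natCast_self]
      have hcmt : DihedralGroup.sr r₀ * DihedralGroup.r (n : ZMod m)
          = DihedralGroup.r (n : ZMod m) * DihedralGroup.sr r₀ := by
        rw [DihedralGroup.sr_mul_r, DihedralGroup.r_mul_sr]
        congr 1
        rw [sub_eq_add_neg, neg_eq_of_add_eq_zero_right hnn]
      obtain ⟨er, eh, her, heh, hcomve⟩ :=
        hcomm (DihedralGroup.sr r₀) (DihedralGroup.r (n : ZMod m)) ⟨r₀, rfl⟩
          (IsConj.refl _) hcmt
      have hkmem : b⁻¹ * er ∈ π.ker := by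
        rw [MonoidHom.mem_ker, map_mul, map_inv, hbπ, her, srInvAux]
        simp [DihedralGroup.one_def, -DihedralGroup.r_zero]
      have hlmem : (a ^ n)⁻¹ * eh ∈ π.ker := by
        rw [MonoidHom.mem_ker, map_mul, map_inv, map_pow, haπ, heh,
          DihedralGroup.r_one_pow]
        simp [DihedralGroup.one_def, -DihedralGroup.r_zero]
      set k : E := b⁻¹ * er with hk_def
      set l : E := (a ^ n)⁻¹ * eh with hl_def
      have hkc : ∀ x : E, x * k = k * x := hcen ⟨k, hkmem⟩
      have hlc : ∀ x : E, x * l = l * x := hcen ⟨l, hlmem⟩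
      have h1 : er = b * k := by rw [hk_def]; group
      have h2 : eh = a ^ n * l := by rw [hl_def]; group
      have hban : b * a ^ n = a ^ n * b := by
        have e1 : b * k * (a ^ n * l) = b * a ^ n * (k * l) := by
          rw [show b * k * (a ^ n * l) = b * (k * a ^ n) * l by group,
            ← hkc (a ^ n)]
          group
        have e2 : a ^ n * l * (b * k) = a ^ n * b * (k * l) := by
          rw [show a ^ n * l * (b * k) = a ^ n * (l * b) * k by group,
            ← hlc b, show a ^ n * (b * l) * k = a ^ n * b * (l * k) by group,
            hkc l]
        rw [h1, h2] at hcomve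
        rw [e1, e2] at hcomve
        exact mul_right_cancel hcomve
      have h3 : b * a ^ n * b⁻¹ = a ^ n := by rw [hban]; group
      have hcz : Commute a⁻¹ (zk : E) := hcen zk a⁻¹
      have h4 : (a⁻¹ * (zk : E)) ^ n = (a⁻¹) ^ n * (zk : E) ^ n :=
        hcz.mul_pow n
      have h5 : a ^ n = (a⁻¹) ^ n * (zk : E) ^ n := by
        rw [← h4, ← hconj, hconjpow, h3]
      have hznE : (zk : E) ^ n = 1 := by
        have h6 : a ^ n * a ^ n = a ^ n * (a⁻¹) ^ n * (zk : E) ^ n := by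
          rw [mul_assoc, ← h5]
        have h7 : a ^ n * (a⁻¹) ^ n = 1 := by group
        have h8 : a ^ n * a ^ n = 1 := by
          rw [← pow_add, ← hn, ham1]
        rw [h7, one_mul] at h6
        rw [h8] at h6
        exact h6.symm
      have hzn : zk⁻¹ ^ n = 1 := by
        apply Subtype.ext
        simp [inv_pow, hznE]
      obtain ⟨u, hu1, hu2⟩ := root zk⁻¹ n hzn
      refine ⟨u, hu1, ?_⟩
      rwa [show 2 * n = m by omega] at hu2
    · -- odd case : Bezout
      obtain ⟨t, ht⟩ := hodd
      refine ⟨zk⁻¹ ^ (t + 1), ?_, ?_⟩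
      · rw [← pow_mul]
        have : (t + 1) * 2 = m + 1 := by omega
        rw [this, pow_succ, inv_pow, hzm]
        group
      · rw [← pow_mul, mul_comm, pow_mul, inv_pow, hzm]
        group
  have hu2E : (u : E) * (u : E) = (zk : E)⁻¹ := by
    have := congrArg Subtype.val hu2
    simpa [pow_two] using this
  have humE : (u : E) ^ m = 1 := by
    have := congrArg Subtype.val hum
    simpa using this
  -- the corrected rotation lift
  set A : E := a * (u : E) with hA_def
  have hAm : A ^ m = 1 := by
    have hca : Commute a (u : E) := hcen u a
    rw [hA_def, hca.mul_pow, ham1, humE, one_mul]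
  have hAπ : π A = DihedralGroup.r 1 := by
    have hu1 : π (u : E) = 1 := u.2
    rw [hA_def, map_mul, hu1, haπ, mul_one]
  have hAconj : b * A * b⁻¹ = A⁻¹ := by
    have hcu : ∀ x : E, x * (u : E) = (u : E) * x := hcen u
    have hcui : ∀ x : E, x * (u : E)⁻¹ = (u : E)⁻¹ * x := by
      intro x
      have := hcen u⁻¹ x
      simpa using this
    have h1 : b * A * b⁻¹ = (b * a * b⁻¹) * (u : E) := by
      rw [hA_def, show b * (a * (u : E)) * b⁻¹ = b * a * ((u : E) * b⁻¹) by group,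
        ← hcu b⁻¹]
      group
    have h2 : (zk : E) * (u : E) = (u : E)⁻¹ := by
      have h3 : (zk : E) = ((u : E) * (u : E))⁻¹ := by rw [hu2E]; group
      rw [h3]; group
    have h4 : A⁻¹ = a⁻¹ * (u : E)⁻¹ := by
      rw [hA_def, mul_inv_rev]
      exact (hcui a⁻¹).symm
    rw [h1, hconj, mul_assoc, h2, h4]
  -- conjugation and power lemmas for A
  have hAconj' : ∀ k : ℕ, b * A ^ k * b = (A ^ k)⁻¹ := by
    intro k
    have h1 : (b * A * b⁻¹) ^ k = b * A ^ k * b⁻¹ := hconjpow b A k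
    rw [hAconj, inv_pow, hbinv] at h1
    exact h1.symm
  have hswap : ∀ k : ℕ, A ^ k * b = b * (A ^ k)⁻¹ := by
    intro k
    calc A ^ k * b = b * b * A ^ k * b := by rw [hb2, one_mul]
      _ = b * (b * A ^ k * b) := by group
      _ = b * (A ^ k)⁻¹ := by rw [hAconj' k]
  have hAadd : ∀ i j : ZMod m, A ^ (i + j).val = A ^ i.val * A ^ j.val := by
    intro i j
    rw [ZMod.val_add,
      show A ^ ((i.val + j.val) % m) = A ^ (i.val + j.val) from
        (pow_eq_pow_mod _ hAm).symm,
      pow_add]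
  have hAneg : ∀ i : ZMod m, A ^ (-i).val = (A ^ i.val)⁻¹ := by
    intro i
    have h := hAadd i (-i)
    rw [add_neg_cancel, ZMod.val_zero, pow_zero] at h
    exact (inv_eq_of_mul_eq_one_right h.symm).symm
  -- the reflection lift
  set B : E := b * A ^ ((-r₀ : ZMod m)).val with hB_def
  have hBπ : π B = DihedralGroup.sr 0 := by
    rw [hB_def, map_mul, map_pow, hbπ, hAπ, DihedralGroup.r_one_pow]
    rw [show (((-r₀ : ZMod m)).val : ZMod m) = -r₀ by
      simp [ZMod.natCast_val, ZMod.cast_id]]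
    rw [DihedralGroup.sr_mul_r, add_neg_cancel]
  have hB2 : B * B = 1 := by
    rw [hB_def, show b * A ^ ((-r₀ : ZMod m)).val * (b * A ^ ((-r₀ : ZMod m)).val)
        = (b * A ^ ((-r₀ : ZMod m)).val * b) * A ^ ((-r₀ : ZMod m)).val by group,
      hAconj' ((-r₀ : ZMod m)).val, inv_mul_cancel]
  have hBswap : ∀ k : ℕ, A ^ k * B = B * (A ^ k)⁻¹ := by
    intro k
    rw [hB_def, ← mul_assoc, hswap k]
    have hc : Commute ((A ^ k)⁻¹) (A ^ ((-r₀ : ZMod m)).val) :=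
      ((Commute.pow_pow_self A k ((-r₀ : ZMod m)).val).inv_left)
    rw [mul_assoc, hc.eq, ← mul_assoc]
  -- build the section
  let f : DihedralGroup m → E := fun x =>
    match x with
    | DihedralGroup.r i => A ^ i.val
    | DihedralGroup.sr i => B * A ^ i.val
  refine ⟨{ toFun := f, map_one' := ?_, map_mul' := ?_ }, ?_⟩
  · show A ^ (0 : ZMod m).val = 1
    rw [ZMod.val_zero, pow_zero]
  · rintro (i | i) (j | j)
    · show A ^ (i + j).val = A ^ i.val * A ^ j.val
      exact hAadd i j
    · show B * A ^ (j - i).val = A ^ i.val * (B * A ^ j.val)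
      rw [← mul_assoc, hBswap i.val, sub_eq_neg_add, hAadd, hAneg, hB_def]
      group
    · show B * A ^ (i + j).val = B * A ^ i.val * A ^ j.val
      rw [hAadd, hB_def]
      group
    · show A ^ (j - i).val = B * A ^ i.val * (B * A ^ j.val)
      rw [show B * A ^ i.val * (B * A ^ j.val)
          = B * (A ^ i.val * B) * A ^ j.val by group,
        hBswap i.val, show B * (B * (A ^ i.val)⁻¹) * A ^ j.val
          = (B * B) * ((A ^ i.val)⁻¹ * A ^ j.val) by group,
        hB2, one_mul, sub_eq_neg_add, hAadd, hAneg]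
  · apply MonoidHom.ext
    rintro (i | i)
    · show π (A ^ i.val) = DihedralGroup.r i
      rw [map_pow, hAπ, DihedralGroup.r_one_pow]
      congr 1
      simp [ZMod.natCast_val, ZMod.cast_id]
    · show π (B * A ^ i.val) = DihedralGroup.sr i
      rw [map_mul, map_pow, hBπ, hAπ, DihedralGroup.r_one_pow,
        DihedralGroup.sr_mul_r, zero_add]
      congr 1
      simp [ZMod.natCast_val, ZMod.cast_id]
end

section
/- Let A₄ be the alternating group on 4 letters and let π : E → A₄ be a surjective group homomorphism whose kernel is contained in the center of E and is isomorphic, as an abstract group, to ℚ/ℤ. Suppose that for every element g ∈ A₄ of order 2 and every h ∈ A₄ commuting with g there exist lifts g̃, h̃ ∈ E of g, h with g̃·h̃ = h̃·g̃. Then π admits a group-homomorphism section s : A₄ → E with π ∘ s = id. -/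
namespace A4CommLift

/-- A fixed double transposition in `S₄`. -/
def g0 : Equiv.Perm (Fin 4) := Equiv.swap 0 1 * Equiv.swap 2 3
/-- A fixed 3-cycle in `S₄`. -/
def c0 : Equiv.Perm (Fin 4) := Equiv.swap 0 1 * Equiv.swap 1 2

def gA : alternatingGroup (Fin 4) := ⟨g0, by rw [Equiv.Perm.mem_alternatingGroup]; decide⟩
def cA : alternatingGroup (Fin 4) := ⟨c0, by rw [Equiv.Perm.mem_alternatingGroup]; decide⟩
def hA : alternatingGroup (Fin 4) := cA * gA * cA⁻¹

/-- The Klein four subgroup of `A₄`, listed. -/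
def VA : Fin 4 → alternatingGroup (Fin 4) := ![1, gA, hA, gA * hA]

/-- Multiplication table of the Klein four group. -/
def MT : Fin 4 → Fin 4 → Fin 4 := ![![0,1,2,3],![1,0,3,2],![2,3,0,1],![3,2,1,0]]
/-- Conjugation action of powers of the 3-cycle on the Klein four group. -/
def RT : Fin 3 → Fin 4 → Fin 4 := ![![0,1,2,3],![0,2,3,1],![0,3,1,2]]

/-- The abstract multiplication on index pairs modelling `V₄ ⋊ C₃`. -/
def mulIdx : Fin 4 × Fin 3 → Fin 4 × Fin 3 → Fin 4 × Fin 3 :=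
  fun p q => (MT p.1 (RT p.2 q.1), p.2 + q.2)

/-- Enumeration of `A₄` by index pairs. -/
def GF : Fin 4 × Fin 3 → alternatingGroup (Fin 4) := fun p => VA p.1 * cA ^ (p.2 : ℕ)

lemma GF_bij : Function.Bijective GF := by decide

lemma GF_mul : ∀ p q, GF (mulIdx p q) = GF p * GF q := by decide

lemma gA_sq : gA * gA = 1 := by decide
lemma gA_ne_one : gA ≠ 1 := by decide
lemma gA_comm_hA : gA * hA = hA * gA := by decide
lemma cA_cube : cA * (cA * cA) = 1 := by decide
lemma conj_hA : cA * hA * cA⁻¹ * (gA * hA)⁻¹ = 1 := by decide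
lemma RT_two : ∀ i, RT 2 i = RT 1 (RT 1 i) := by decide
lemma RT_zero : ∀ i, RT 0 i = i := by decide
lemma GF_one : GF (0, 0) = 1 := by decide

end A4CommLift

open A4CommLift in
/- Let `π : E → A₄` be a central extension of the alternating group on four
letters whose kernel is isomorphic, as an abstract group, to `ℚ/ℤ`.  If every
element `g` of order `2` in `A₄` and every `h` commuting with `g` admit commuting
lifts in `E`, then `π` splits: it has a group-homomorphism section. -/
theorem central_extension_splits_of_commuting_lifts_A4
    (E : Type*) [Group E]
    (π : E →* alternatingGroup (Fin 4)) (hsurj : Function.Surjective π)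
    (hcentral : π.ker ≤ Subgroup.center E)
    (hker : Nonempty (π.ker ≃* Multiplicative (ℚ ⧸ AddSubgroup.zmultiples (1 : ℚ))))
    (hcomm : ∀ g h : alternatingGroup (Fin 4), orderOf g = 2 → g * h = h * g →
      ∃ eg eh : E, π eg = g ∧ π eh = h ∧ eg * eh = eh * eg) :
    ∃ s : alternatingGroup (Fin 4) →* E, π.comp s = MonoidHom.id (alternatingGroup (Fin 4)) := by
  classical
  obtain ⟨φ⟩ := hker
  -- the kernel is divisible
  have hdiv : ∀ (x : π.ker) (n : ℕ), n ≠ 0 → ∃ y : π.ker, y ^ n = x := by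
    intro x n hn
    obtain ⟨q, hq⟩ := QuotientAddGroup.mk_surjective (Multiplicative.toAdd (φ x))
    refine ⟨φ.symm (Multiplicative.ofAdd ((QuotientAddGroup.mk ((n : ℚ)⁻¹ * q)) :
      ℚ ⧸ AddSubgroup.zmultiples (1 : ℚ))), ?_⟩
    apply φ.injective
    rw [map_pow, MulEquiv.apply_symm_apply]
    have h1 : (Multiplicative.ofAdd ((QuotientAddGroup.mk ((n : ℚ)⁻¹ * q)) :
        ℚ ⧸ AddSubgroup.zmultiples (1 : ℚ))) ^ n
        = Multiplicative.ofAdd (n • ((QuotientAddGroup.mk ((n : ℚ)⁻¹ * q)) :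
        ℚ ⧸ AddSubgroup.zmultiples (1 : ℚ))) := by
      rw [ofAdd_nsmul]
    rw [h1]
    have h2 : (n • ((QuotientAddGroup.mk ((n : ℚ)⁻¹ * q)) :
        ℚ ⧸ AddSubgroup.zmultiples (1 : ℚ)))
        = ((QuotientAddGroup.mk (n • ((n : ℚ)⁻¹ * q))) :
        ℚ ⧸ AddSubgroup.zmultiples (1 : ℚ)) := by
      exact (QuotientAddGroup.mk_nsmul (AddSubgroup.zmultiples (1 : ℚ)) ((n : ℚ)⁻¹ * q) n).symm
    have h3 : n • ((n : ℚ)⁻¹ * q) = q := by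
      rw [nsmul_eq_mul, ← mul_assoc, mul_inv_cancel₀ (by exact_mod_cast hn), one_mul]
    rw [h2, h3, hq, ofAdd_toAdd]
  -- centrality helper
  have cen : ∀ z : E, π z = 1 → ∀ x : E, z * x = x * z := by
    intro z hz x
    exact (Subgroup.mem_center_iff.mp (hcentral (MonoidHom.mem_ker.mpr hz)) x).symm
  -- lift of the 3-cycle, of order 3
  obtain ⟨e, he⟩ := hsurj cA
  have he3 : π (e * (e * e)) = 1 := by rw [map_mul, map_mul, he]; exact cA_cube
  obtain ⟨ζ, hζ⟩ := hdiv ⟨e * (e * e), MonoidHom.mem_ker.mpr he3⟩ 3 (by norm_num)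
  have hζc : ∀ x : E, (ζ : E) * x = x * (ζ : E) := by
    intro x
    exact (Subgroup.mem_center_iff.mp (hcentral ζ.2) x).symm
  obtain ⟨t, htdef⟩ : ∃ t : E, t = e * (ζ : E)⁻¹ := ⟨_, rfl⟩
  have hπζ : π (ζ : E) = 1 := MonoidHom.mem_ker.mp ζ.2
  have hπt : π t = cA := by rw [htdef, map_mul, map_inv, hπζ, inv_one, mul_one, he]
  have ht3 : t ^ 3 = 1 := by
    have hc0 : Commute (ζ : E) e := hζc e
    have hce : Commute e ((ζ : E)⁻¹) := hc0.inv_left.symm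
    have hz3 : ((ζ : E)) ^ 3 = e * (e * e) := by
      have := congrArg (Subtype.val) hζ
      simpa using this
    rw [htdef, hce.mul_pow, inv_pow, hz3]
    group
  -- lift of the double transposition, of order 2
  obtain ⟨e', he'⟩ := hsurj gA
  have he'2 : π (e' * e') = 1 := by rw [map_mul, he']; exact gA_sq
  obtain ⟨μ, hμ⟩ := hdiv ⟨e' * e', MonoidHom.mem_ker.mpr he'2⟩ 2 (by norm_num)
  have hμc : ∀ x : E, (μ : E) * x = x * (μ : E) := by
    intro x
    exact (Subgroup.mem_center_iff.mp (hcentral μ.2) x).symm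
  obtain ⟨a, hadef⟩ : ∃ a : E, a = e' * (μ : E)⁻¹ := ⟨_, rfl⟩
  have hπμ : π (μ : E) = 1 := MonoidHom.mem_ker.mp μ.2
  have hπa : π a = gA := by rw [hadef, map_mul, map_inv, hπμ, inv_one, mul_one, he']
  have ha2 : a * a = 1 := by
    have hc0 : Commute (μ : E) e' := hμc e'
    have hce : Commute e' ((μ : E)⁻¹) := hc0.inv_left.symm
    have hz2 : ((μ : E)) ^ 2 = e' * e' := by
      have := congrArg (Subtype.val) hμ
      simpa using this
    have : a ^ 2 = 1 := by
      rw [hadef, hce.mul_pow, inv_pow, hz2]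
      group
    rwa [pow_two] at this
  -- b := t a t⁻¹
  obtain ⟨b, hbdef⟩ : ∃ b : E, b = t * a * t⁻¹ := ⟨_, rfl⟩
  have hπb : π b = hA := by
    rw [hbdef, map_mul, map_mul, map_inv, hπt, hπa, hA]
  have hb2 : b * b = 1 := by
    have h : b * b = t * (a * a) * t⁻¹ := by rw [hbdef]; group
    rw [h, ha2]; group
  -- a and b commute, by the commuting-lifts hypothesis
  have hab : a * b = b * a := by
    have hord : orderOf gA = 2 := by
      have : Fact (Nat.Prime 2) := ⟨Nat.prime_two⟩
      exact orderOf_eq_prime (by rw [pow_two]; exact gA_sq) gA_ne_one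
    obtain ⟨eg, eh, hg1, hh1, hc⟩ := hcomm gA hA hord gA_comm_hA
    have hk1 : π (eg⁻¹ * a) = 1 := by rw [map_mul, map_inv, hg1, hπa, inv_mul_cancel]
    have hk2 : π (eh⁻¹ * b) = 1 := by rw [map_mul, map_inv, hh1, hπb, inv_mul_cancel]
    have ea : a = eg * (eg⁻¹ * a) := by group
    have eb : b = eh * (eh⁻¹ * b) := by group
    have hcc : Commute eg eh := hc
    have hc2 : Commute (eh⁻¹ * b) eg := cen _ hk2 eg
    have hc1 : Commute (eg⁻¹ * a) (eh * (eh⁻¹ * b)) := cen _ hk1 _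
    have comm1 : Commute eg (eh * (eh⁻¹ * b)) := hcc.mul_right hc2.symm
    have : Commute (eg * (eg⁻¹ * a)) (eh * (eh⁻¹ * b)) := comm1.mul_left hc1
    rw [← ea, ← eb] at this
    exact this
  -- the obstruction w
  obtain ⟨w, hwdef⟩ : ∃ w : E, w = t * b * t⁻¹ * (a * b)⁻¹ := ⟨_, rfl⟩
  have hπw : π w = 1 := by
    rw [hwdef]
    simp only [map_mul, map_inv]
    rw [hπt, hπb, hπa]
    exact conj_hA
  have hwc : ∀ x : E, w * x = x * w := cen w hπw
  have htbt : t * b * t⁻¹ = a * b * w := by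
    rw [← hwc (a * b), hwdef]; group
  have htabt : t * (a * b) * t⁻¹ = a * w := by
    calc t * (a * b) * t⁻¹ = (t * a * t⁻¹) * (t * b * t⁻¹) := by group
    _ = b * (a * b * w) := by rw [← hbdef, htbt]
    _ = (b * a) * b * w := by group
    _ = (a * b) * b * w := by rw [← hab]
    _ = a * (b * b) * w := by group
    _ = a * w := by rw [hb2]; group
  have ht2bt : t * (t * b * t⁻¹) * t⁻¹ = a * (w * w) := by
    calc t * (t * b * t⁻¹) * t⁻¹ = t * (a * b * w) * t⁻¹ := by rw [htbt]
    _ = t * (a * b) * (w * t⁻¹) := by group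
    _ = t * (a * b) * (t⁻¹ * w) := by rw [hwc]
    _ = (t * (a * b) * t⁻¹) * w := by group
    _ = a * w * w := by rw [htabt]
    _ = a * (w * w) := by group
  have hw2 : w * w = 1 := by
    have key : t * (t * (t * b * t⁻¹) * t⁻¹) * t⁻¹ = b * (w * w) := by
      calc t * (t * (t * b * t⁻¹) * t⁻¹) * t⁻¹ = t * (a * (w * w)) * t⁻¹ := by rw [ht2bt]
      _ = t * a * (w * (w * t⁻¹)) := by group
      _ = t * a * (w * (t⁻¹ * w)) := by rw [hwc t⁻¹]
      _ = t * a * (w * t⁻¹) * w := by group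
      _ = t * a * (t⁻¹ * w) * w := by rw [hwc t⁻¹]
      _ = (t * a * t⁻¹) * (w * w) := by group
      _ = b * (w * w) := by rw [← hbdef]
    have ht3m : t * t * t = 1 := by
      have h := ht3
      rw [pow_succ, pow_succ, pow_one] at h
      exact h
    have key2 : t * (t * (t * b * t⁻¹) * t⁻¹) * t⁻¹ = (t * t * t) * b * (t * t * t)⁻¹ := by
      group
    rw [key2, ht3m] at key
    have hbb : b * 1 = b * (w * w) := by
      rw [mul_one]
      calc b = 1 * b * 1⁻¹ := by group
      _ = b * (w * w) := key
    exact (mul_left_cancel hbb).symm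
  -- corrected lifts
  obtain ⟨a', ha'def⟩ : ∃ x : E, x = a * w := ⟨_, rfl⟩
  obtain ⟨b', hb'def⟩ : ∃ x : E, x = b * w := ⟨_, rfl⟩
  have hπa' : π a' = gA := by rw [ha'def, map_mul, hπw, mul_one, hπa]
  have hπb' : π b' = hA := by rw [hb'def, map_mul, hπw, mul_one, hπb]
  have ra : a' * a' = 1 := by
    calc a' * a' = a * (w * a) * w := by rw [ha'def]; group
    _ = a * (a * w) * w := by rw [hwc a]
    _ = (a * a) * (w * w) := by group
    _ = 1 := by rw [ha2, hw2, mul_one]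
  have rb : b' * b' = 1 := by
    calc b' * b' = b * (w * b) * w := by rw [hb'def]; group
    _ = b * (b * w) * w := by rw [hwc b]
    _ = (b * b) * (w * w) := by group
    _ = 1 := by rw [hb2, hw2, mul_one]
  have rabv : a' * b' = a * b := by
    calc a' * b' = a * (w * b) * w := by rw [ha'def, hb'def]; group
    _ = a * (b * w) * w := by rw [hwc b]
    _ = (a * b) * (w * w) := by group
    _ = a * b := by rw [hw2, mul_one]
  have rbav : b' * a' = b * a := by
    calc b' * a' = b * (w * a) * w := by rw [ha'def, hb'def]; group
    _ = b * (a * w) * w := by rw [hwc a]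
    _ = (b * a) * (w * w) := by group
    _ = b * a := by rw [hw2, mul_one]
  have rab : a' * b' = b' * a' := by rw [rabv, rbav, hab]
  have rt1 : t * a' * t⁻¹ = b' := by
    calc t * a' * t⁻¹ = t * a * (w * t⁻¹) := by rw [ha'def]; group
    _ = t * a * (t⁻¹ * w) := by rw [hwc t⁻¹]
    _ = (t * a * t⁻¹) * w := by group
    _ = b' := by rw [← hbdef, ← hb'def]
  have rt2 : t * b' * t⁻¹ = a' * b' := by
    calc t * b' * t⁻¹ = t * b * (w * t⁻¹) := by rw [hb'def]; group
    _ = t * b * (t⁻¹ * w) := by rw [hwc t⁻¹]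
    _ = (t * b * t⁻¹) * w := by group
    _ = a * b * (w * w) := by rw [htbt]; group
    _ = a * b := by rw [hw2, mul_one]
    _ = a' * b' := rabv.symm
  have rt3 : t * (a' * b') * t⁻¹ = a' := by
    rw [rabv]
    calc t * (a * b) * t⁻¹ = a * w := htabt
    _ = a' := ha'def.symm
  -- the complement, indexed by Fin 4 × Fin 3
  have e1 : a' * (a' * b') = b' := by rw [← mul_assoc, ra, one_mul]
  have e2 : b' * (a' * b') = a' := by rw [rab, ← mul_assoc, rb, one_mul]
  have e3 : b' * a' = a' * b' := rab.symm
  have e4 : a' * b' * a' = b' := by rw [rab, mul_assoc, ra, mul_one]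
  have e5 : a' * b' * b' = a' := by rw [mul_assoc, rb, mul_one]
  have e6 : a' * b' * (a' * b') = 1 := by rw [mul_assoc, e2, ra]
  set v : Fin 4 → E := ![1, a', b', a' * b'] with hvdef
  have hV : ∀ i k : Fin 4, v i * v k = v (MT i k) := by
    intro i k
    fin_cases i <;> fin_cases k <;> simp only [hvdef] <;>
      first
        | exact one_mul _
        | exact mul_one _
        | exact ra | exact rb | exact rfl | exact e1 | exact e2 | exact e3
        | exact e4 | exact e5 | exact e6
  have hT1 : ∀ i : Fin 4, t * v i * t⁻¹ = v (RT 1 i) := by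
    intro i
    fin_cases i <;> simp only [hvdef]
    · show t * 1 * t⁻¹ = 1; group
    · exact rt1
    · exact rt2
    · exact rt3
  have hT1' : ∀ i : Fin 4, t * v i = v (RT 1 i) * t := by
    intro i
    rw [← hT1 i]; group
  have hTj : ∀ (j : Fin 3) (i : Fin 4), t ^ (j : ℕ) * v i = v (RT j i) * t ^ (j : ℕ) := by
    intro j i
    fin_cases j
    · show t ^ 0 * v i = v (RT 0 i) * t ^ 0
      rw [RT_zero, pow_zero, one_mul, mul_one]
    · show t ^ 1 * v i = v (RT 1 i) * t ^ 1
      rw [pow_one, hT1']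
    · show t ^ 2 * v i = v (RT 2 i) * t ^ 2
      calc t ^ 2 * v i = t * (t * v i) := by rw [pow_two, mul_assoc]
      _ = t * (v (RT 1 i) * t) := by rw [hT1']
      _ = (t * v (RT 1 i)) * t := by group
      _ = v (RT 1 (RT 1 i)) * t * t := by rw [hT1']
      _ = v (RT 2 i) * t ^ 2 := by rw [← RT_two, pow_two, mul_assoc]
  have hmod : ∀ n : ℕ, t ^ (n % 3) = t ^ n := by
    intro n
    conv_rhs => rw [← Nat.mod_add_div n 3]
    rw [pow_add, pow_mul, ht3, one_pow, mul_one]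
  -- the candidate section, as a function on index pairs
  set F : Fin 4 × Fin 3 → E := fun p => v p.1 * t ^ ((p.2 : ℕ)) with hFdef
  have hFmul : ∀ p q, F (mulIdx p q) = F p * F q := by
    rintro ⟨i₁, j₁⟩ ⟨i₂, j₂⟩
    simp only [hFdef]
    show v (MT i₁ (RT j₁ i₂)) * t ^ (((j₁ + j₂ : Fin 3)) : ℕ)
      = (v i₁ * t ^ (j₁ : ℕ)) * (v i₂ * t ^ (j₂ : ℕ))
    have hpow : t ^ (((j₁ + j₂ : Fin 3)) : ℕ) = t ^ (j₁ : ℕ) * t ^ (j₂ : ℕ) := by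
      have hval : (((j₁ + j₂ : Fin 3)) : ℕ) = ((j₁ : ℕ) + (j₂ : ℕ)) % 3 := by
        rw [Fin.val_add]
      rw [hval, hmod, pow_add]
    calc v (MT i₁ (RT j₁ i₂)) * t ^ (((j₁ + j₂ : Fin 3)) : ℕ)
        = (v i₁ * v (RT j₁ i₂)) * (t ^ (j₁ : ℕ) * t ^ (j₂ : ℕ)) := by rw [hV, hpow]
      _ = v i₁ * (v (RT j₁ i₂) * t ^ (j₁ : ℕ)) * t ^ (j₂ : ℕ) := by group
      _ = v i₁ * (t ^ (j₁ : ℕ) * v i₂) * t ^ (j₂ : ℕ) := by rw [hTj]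
      _ = (v i₁ * t ^ (j₁ : ℕ)) * (v i₂ * t ^ (j₂ : ℕ)) := by group
  have hπv : ∀ i : Fin 4, π (v i) = VA i := by
    intro i
    fin_cases i <;> simp only [hvdef]
    · show π 1 = (1 : alternatingGroup (Fin 4)); exact map_one π
    · exact hπa'
    · exact hπb'
    · show π (a' * b') = gA * hA
      rw [map_mul, hπa', hπb']
  have hπF : ∀ p, π (F p) = GF p := by
    rintro ⟨i, j⟩
    simp only [hFdef]
    show π (v i * t ^ (j : ℕ)) = VA i * cA ^ (j : ℕ)
    rw [map_mul, map_pow, hπv, hπt]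
  -- assemble the section
  let Geq : (Fin 4 × Fin 3) ≃ alternatingGroup (Fin 4) := Equiv.ofBijective GF GF_bij
  have hGeq : ∀ p, Geq p = GF p := fun p => rfl
  have hsymm_mul : ∀ x y : alternatingGroup (Fin 4),
      Geq.symm (x * y) = mulIdx (Geq.symm x) (Geq.symm y) := by
    intro x y
    rw [Equiv.symm_apply_eq, hGeq, GF_mul]
    have hx : GF (Geq.symm x) = x := Geq.apply_symm_apply x
    have hy : GF (Geq.symm y) = y := Geq.apply_symm_apply y
    rw [hx, hy]
  refine ⟨{ toFun := fun x => F (Geq.symm x)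
            map_one' := ?_
            map_mul' := ?_ }, ?_⟩
  · have h1 : Geq.symm 1 = (0, 0) := by
      rw [Equiv.symm_apply_eq, hGeq, GF_one]
    show F (Geq.symm 1) = 1
    rw [h1]
    simp only [hFdef, hvdef]
    show (1 : E) * t ^ 0 = 1
    rw [pow_zero, one_mul]
  · intro x y
    show F (Geq.symm (x * y)) = F (Geq.symm x) * F (Geq.symm y)
    rw [hsymm_mul, hFmul]
  · refine MonoidHom.ext fun x => ?_
    show π (F (Geq.symm x)) = x
    rw [hπF]
    exact Geq.apply_symm_apply x
end

section
/- Let π : E → G be a surjective group homomorphism with kernel contained in the center of E, and let g, h ∈ G commute. Then: (i) for any lifts g̃, h̃ ∈ E of g, h, the commutator [g̃,h̃] = g̃·h̃·g̃⁻¹·h̃⁻¹ lies in ker π and is independent of the choice of lifts; (ii) if moreover every element of ker π has an n-th root in ker π for every n ≥ 1 (for instance if ker π ≅ ℚ/ℤ), then the restriction of π over the subgroup ⟨g,h⟩ generated by g and h, i.e. the map π⁻¹(⟨g,h⟩) → ⟨g,h⟩, admits a group-homomorphism section if and only if [g̃,h̃] = 1. -/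
open scoped commutatorElement

private lemma comm_central_left {E : Type*} [Group E] (a b z : E)
    (hz : ∀ x, z * x = x * z) : ⁅z * a, b⁆ = ⁅a, b⁆ := by
  simp only [commutatorElement_def, mul_inv_rev]
  calc z * a * b * (a⁻¹ * z⁻¹) * b⁻¹
      = z * (a * b * a⁻¹) * z⁻¹ * b⁻¹ := by group
    _ = (a * b * a⁻¹) * z * z⁻¹ * b⁻¹ := by rw [hz]
    _ = a * b * a⁻¹ * b⁻¹ := by group

private lemma comm_central_right {E : Type*} [Group E] (a b z : E)
    (hz : ∀ x, z * x = x * z) : ⁅a, z * b⁆ = ⁅a, b⁆ := by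
  have h1 : ⁅z * b, a⁆ = ⁅b, a⁆ := comm_central_left b a z hz
  calc ⁅a, z * b⁆ = ⁅z * b, a⁆⁻¹ := (commutatorElement_inv _ _).symm
    _ = ⁅b, a⁆⁻¹ := by rw [h1]
    _ = ⁅a, b⁆ := commutatorElement_inv _ _

/- Let `π : E → G` be a surjective central extension and let `g, h ∈ G` commute.
(i) For any lifts `g̃, h̃` of `g, h`, the commutator `⁅g̃, h̃⁆` lies in `ker π`
and is independent of the choice of lifts.
(ii) If moreover every element of `ker π` has an `n`-th root in `ker π` for every
`n ≥ 1`, then the restriction `π⁻¹(⟨g,h⟩) → ⟨g,h⟩` admits a group-homomorphism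
section if and only if `⁅g̃, h̃⁆ = 1`. -/
theorem commutator_of_lifts_and_splitting_criterion
    (E G : Type*) [Group E] [Group G] (π : E →* G)
    (hsurj : Function.Surjective π) (hcentral : π.ker ≤ Subgroup.center E)
    (g h : G) (hgh : g * h = h * g) :
    (∀ g₁ h₁ g₂ h₂ : E, π g₁ = g → π h₁ = h → π g₂ = g → π h₂ = h →
      ⁅g₁, h₁⁆ ∈ π.ker ∧ ⁅g₁, h₁⁆ = ⁅g₂, h₂⁆) ∧
    ((∀ x ∈ π.ker, ∀ n : ℕ, 1 ≤ n → ∃ y ∈ π.ker, y ^ n = x) →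
      ∀ g₁ h₁ : E, π g₁ = g → π h₁ = h →
        ((∃ s : Subgroup.closure {g, h} →* Subgroup.comap π (Subgroup.closure {g, h}),
            (π.subgroupComap (Subgroup.closure {g, h})).comp s =
              MonoidHom.id (Subgroup.closure {g, h})) ↔ ⁅g₁, h₁⁆ = 1)) := by
  have central_comm : ∀ z ∈ π.ker, ∀ x : E, z * x = x * z := fun z hz x =>
    ((Subgroup.mem_center_iff.mp (hcentral hz)) x).symm
  have part1 : ∀ g₁ h₁ g₂ h₂ : E, π g₁ = g → π h₁ = h → π g₂ = g → π h₂ = h →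
      ⁅g₁, h₁⁆ ∈ π.ker ∧ ⁅g₁, h₁⁆ = ⁅g₂, h₂⁆ := by
    intro g₁ h₁ g₂ h₂ hg1 hh1 hg2 hh2
    constructor
    · rw [MonoidHom.mem_ker, map_commutatorElement, hg1, hh1]
      exact commutatorElement_eq_one_iff_commute.mpr hgh
    · have hzker : g₂ * g₁⁻¹ ∈ π.ker := by
        rw [MonoidHom.mem_ker, map_mul, map_inv, hg1, hg2, mul_inv_cancel]
      have hwker : h₂ * h₁⁻¹ ∈ π.ker := by
        rw [MonoidHom.mem_ker, map_mul, map_inv, hh1, hh2, mul_inv_cancel]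
      have hg₂ : g₂ = (g₂ * g₁⁻¹) * g₁ := by group
      have hh₂ : h₂ = (h₂ * h₁⁻¹) * h₁ := by group
      rw [hg₂, hh₂, comm_central_left _ _ _ (central_comm _ hzker),
        comm_central_right _ _ _ (central_comm _ hwker)]
  refine ⟨part1, ?_⟩
  intro hdiv g₁ h₁ hg1 hh1
  constructor
  · rintro ⟨s, hs⟩
    have hgA : g ∈ Subgroup.closure ({g, h} : Set G) :=
      Subgroup.subset_closure (by simp)
    have hhA : h ∈ Subgroup.closure ({g, h} : Set G) :=
      Subgroup.subset_closure (by simp)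
    set gA : ↥(Subgroup.closure ({g, h} : Set G)) := ⟨g, hgA⟩
    set hB : ↥(Subgroup.closure ({g, h} : Set G)) := ⟨h, hhA⟩
    have hsg : π ((s gA : Subgroup.comap π (Subgroup.closure ({g, h} : Set G))) : E) = g := by
      have := congrArg (fun f => (f gA : G)) hs
      exact this
    have hsh : π ((s hB : Subgroup.comap π (Subgroup.closure ({g, h} : Set G))) : E) = h := by
      have := congrArg (fun f => (f hB : G)) hs
      exact this
    obtain ⟨-, heq⟩ := part1 g₁ h₁ _ _ hg1 hh1 hsg hsh
    rw [heq]
    have hcomm : ⁅gA, hB⁆ = 1 := by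
      apply Subtype.ext
      show g * h * g⁻¹ * h⁻¹ = 1
      rw [hgh]; group
    calc ⁅((s gA : Subgroup.comap π (Subgroup.closure ({g, h} : Set G))) : E),
            ((s hB : Subgroup.comap π (Subgroup.closure ({g, h} : Set G))) : E)⁆
        = (((⁅s gA, s hB⁆ : Subgroup.comap π (Subgroup.closure ({g, h} : Set G)))) : E) := rfl
      _ = ((s ⁅gA, hB⁆ : Subgroup.comap π (Subgroup.closure ({g, h} : Set G))) : E) := by
          rw [map_commutatorElement]
      _ = 1 := by rw [hcomm, map_one]; rfl
  · intro hc
    -- the hard direction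
    have hcom : Commute g₁ h₁ := commutatorElement_eq_one_iff_commute.mp hc
    set A := Subgroup.closure ({g, h} : Set G) with hAdef
    have key : ∀ (S : Subgroup E), π.ker ≤ S → g₁ ∈ S → h₁ ∈ S →
        ∀ y : E, π y ∈ A → y ∈ S := by
      intro S hk hgS hhS y hy
      have hle : A ≤ S.map π := by
        rw [hAdef, Subgroup.closure_le]
        rintro x (rfl | rfl)
        exacts [⟨g₁, hgS, hg1⟩, ⟨h₁, hhS, hh1⟩]
      obtain ⟨c, hcS, hcy⟩ := hle hy
      have hmem : c⁻¹ * y ∈ π.ker := by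
        rw [MonoidHom.mem_ker, map_mul, map_inv, hcy, inv_mul_cancel]
      have hy' : y = c * (c⁻¹ * y) := by group
      rw [hy']
      exact S.mul_mem hcS (hk hmem)
    have hkerC : ∀ s : Set E, π.ker ≤ Subgroup.centralizer s := by
      intro s x hx
      exact Subgroup.mem_centralizer_iff.mpr fun m _ =>
        Subgroup.mem_center_iff.mp (hcentral hx) m
    have step1 : ∀ y : E, π y ∈ A → y ∈ Subgroup.centralizer {g₁, h₁} := by
      refine key _ (hkerC _) ?_ ?_
      · rw [Subgroup.mem_centralizer_iff]
        rintro m (rfl | rfl)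
        · rfl
        · exact hcom.symm.eq
      · rw [Subgroup.mem_centralizer_iff]
        rintro m (rfl | rfl)
        · exact hcom.eq
        · rfl
    have hcommA : ∀ x y : E, π x ∈ A → π y ∈ A → x * y = y * x := by
      intro x y hx hy
      have hxc := Subgroup.mem_centralizer_iff.mp (step1 x hx)
      have hyc : y ∈ Subgroup.centralizer {x} := by
        refine key _ (hkerC _) ?_ ?_ y hy
        · exact Subgroup.mem_centralizer_iff.mpr (by
            rintro m rfl
            exact (hxc g₁ (by simp)).symm)
        · exact Subgroup.mem_centralizer_iff.mpr (by
            rintro m rfl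
            exact (hxc h₁ (by simp)).symm)
      exact Subgroup.mem_centralizer_iff.mp hyc x rfl
    letI : CommGroup ↥(Subgroup.comap π A) :=
      { (inferInstance : Group ↥(Subgroup.comap π A)) with
        mul_comm := fun a b => Subtype.ext
          (hcommA ↑a ↑b (Subgroup.mem_comap.mp a.2) (Subgroup.mem_comap.mp b.2)) }
    set q := π.subgroupComap A with hqdef
    have hq : ∀ x : ↥(Subgroup.comap π A), (q x : G) = π ↑x := fun _ => rfl
    have hqsurj : Function.Surjective q := by
      intro a
      obtain ⟨e, he⟩ := hsurj (a : G)
      exact ⟨⟨e, Subgroup.mem_comap.mpr (he ▸ a.2)⟩, Subtype.ext he⟩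
    have hKmem : ∀ x : ↥(Subgroup.comap π A), x ∈ q.ker ↔ (x : E) ∈ π.ker := by
      intro x
      rw [MonoidHom.mem_ker, MonoidHom.mem_ker, Subtype.ext_iff]
      exact Iff.rfl
    have hroot : ∀ (x : ↥q.ker) (n : ℕ), n ≠ 0 → ∃ y : ↥q.ker, y ^ n = x := by
      intro x n hn
      obtain ⟨y, hy, hyx⟩ := hdiv ((x : ↥(Subgroup.comap π A)) : E)
        ((hKmem _).mp x.2) n (Nat.one_le_iff_ne_zero.mpr hn)
      have hyH : y ∈ Subgroup.comap π A := by
        rw [Subgroup.mem_comap, MonoidHom.mem_ker.mp hy]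
        exact A.one_mem
      refine ⟨⟨⟨y, hyH⟩, (hKmem ⟨y, hyH⟩).mpr hy⟩, ?_⟩
      apply Subtype.ext
      apply Subtype.ext
      exact hyx
    letI : RootableBy ↥q.ker ℕ :=
      rootableByOfPowLeftSurj _ _ (fun {n} hn x => hroot x n hn)
    letI : RootableBy ↥q.ker ℤ := Group.rootableByIntOfRootableByNat _
    letI : DivisibleBy (Additive ↥q.ker) ℤ :=
      { div := fun a n => Additive.ofMul (RootableBy.root a.toMul n)
        div_zero := fun a => congrArg Additive.ofMul (RootableBy.root_zero a.toMul)
        div_cancel := fun {n} a hn => by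
          change n • Additive.ofMul _ = a
          rw [← ofMul_zpow, RootableBy.root_cancel a.toMul hn]
          rfl }
    have hInj : Module.Injective ℤ (Additive ↥q.ker) :=
      (Module.Baer.of_divisible _).injective
    let ι : Additive ↥q.ker →ₗ[ℤ] Additive ↥(Subgroup.comap π A) :=
      (MonoidHom.toAdditive q.ker.subtype).toIntLinearMap
    have hι : Function.Injective ι := by
      intro a b hab
      apply Additive.toMul.injective
      apply Subtype.ext
      apply Subtype.ext
      exact congrArg (fun z => (((Additive.toMul z : ↥(Subgroup.comap π A)) : E))) hab
    obtain ⟨r', hr'⟩ := hInj.out ι hι LinearMap.id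
    let r : ↥(Subgroup.comap π A) →* ↥q.ker :=
      MonoidHom.toAdditive.symm r'.toAddMonoidHom
    have hr : ∀ x : ↥q.ker, r ↑x = x := fun x => hr' x
    let σ : ↥(Subgroup.comap π A) →* ↥(Subgroup.comap π A) :=
      MonoidHom.id _ * (q.ker.subtype.comp r)⁻¹
    have hσ : ∀ e, σ e = e * (↑(r e))⁻¹ := fun _ => rfl
    have hker_le : q.ker ≤ σ.ker := by
      intro x hx
      rw [MonoidHom.mem_ker, hσ]
      have : r x = ⟨x, hx⟩ := hr ⟨x, hx⟩
      rw [this]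
      exact mul_inv_cancel x
    refine ⟨q.liftOfSurjective hqsurj ⟨σ, hker_le⟩, ?_⟩
    apply MonoidHom.ext
    intro a
    obtain ⟨e, rfl⟩ := hqsurj a
    show q ((q.liftOfSurjective hqsurj ⟨σ, hker_le⟩) (q e)) = q e
    rw [MonoidHom.liftOfRightInverse_comp_apply]
    show q (σ e) = q e
    rw [hσ, map_mul, map_inv, MonoidHom.mem_ker.mp (r e).2, inv_one, mul_one]
end

section
/- Let G be a finite abelian group with |G| > 1, embedded in the symmetric group Sym(G) by the regular representation (each g acts on G by translation), and for g ∈ G set ind(g) = |G| − (number of orbits of the cyclic group ⟨g⟩ acting on G by translation). Then ind(g) = |G|·(1 − 1/ord(g)) for every g; the minimum of ind over non-identity elements of G equals |G|·(1 − 1/Q), where Q is the smallest prime divisor of |G|, and is attained exactly at the elements of order Q. Moreover, the subgroup of G generated by the elements of order Q is the Q-torsion subgroup G[Q], and this subgroup equals G if and only if G has exponent Q. -/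
/-- The index of an element `g` of a finite group `G` embedded in `Sym(G)` via the
regular representation:
`ind(g) = |G| − (number of orbits of ⟨g⟩ acting on G by translation)`. -/
noncomputable def regIndex {G : Type*} [Group G] (g : G) : ℕ :=
  Nat.card G - Nat.card (MulAction.orbitRel.Quotient (Subgroup.zpowers g) G)

lemma regIndex_card_orbits {G : Type*} [Group G] (g : G) :
    Nat.card (MulAction.orbitRel.Quotient (Subgroup.zpowers g) G)
      = (Subgroup.zpowers g).index := by
  have free : ∀ y : G, MulAction.stabilizer G y = ⊥ := by
    intro y
    ext x
    simp [MulAction.mem_stabilizer_iff, mul_eq_right]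
  rw [Nat.card_congr
    (MulAction.equivSubgroupOrbitsQuotientGroup (x := (1 : G)) (Subgroup.zpowers g))]
  rfl

lemma regIndex_eq {G : Type*} [Group G] [Finite G] (g : G) :
    regIndex g = Nat.card G - Nat.card G / orderOf g := by
  have h := Subgroup.card_mul_index (Subgroup.zpowers g)
  rw [Nat.card_zpowers] at h
  have ho : orderOf g ≠ 0 := (orderOf_pos g).ne'
  have : (Subgroup.zpowers g).index = Nat.card G / orderOf g := by
    rw [← h, Nat.mul_div_cancel_left _ (Nat.pos_of_ne_zero ho)]
  rw [regIndex, regIndex_card_orbits, this]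

theorem regIndex_abelian (G : Type*) [CommGroup G] [Finite G] (hG : 1 < Nat.card G) :
    (∀ g : G, (regIndex g : ℚ) = (Nat.card G : ℚ) * (1 - 1 / (orderOf g : ℚ))) ∧
    (∃ g : G, orderOf g = (Nat.card G).minFac) ∧
    (∀ g : G, g ≠ 1 →
      ((Nat.card G : ℚ) * (1 - 1 / ((Nat.card G).minFac : ℚ)) ≤ (regIndex g : ℚ) ∧
        ((regIndex g : ℚ) = (Nat.card G : ℚ) * (1 - 1 / ((Nat.card G).minFac : ℚ)) ↔
          orderOf g = (Nat.card G).minFac))) ∧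
    Subgroup.closure {g : G | orderOf g = (Nat.card G).minFac} =
      (powMonoidHom (Nat.card G).minFac : G →* G).ker ∧
    ((powMonoidHom (Nat.card G).minFac : G →* G).ker = ⊤ ↔
      Monoid.exponent G = (Nat.card G).minFac) := by
  set n := Nat.card G with hn
  set Q := n.minFac with hQ
  have hQp : Q.Prime := Nat.minFac_prime (by omega)
  have hQdvd : Q ∣ n := Nat.minFac_dvd n
  have hn0 : (n : ℚ) ≠ 0 := by positivity
  -- the formula for regIndex
  have key : ∀ g : G, (regIndex g : ℚ) = (n : ℚ) * (1 - 1 / (orderOf g : ℚ)) := by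
    intro g
    have hd : orderOf g ∣ n := orderOf_dvd_natCard g
    have hdpos : 0 < orderOf g := orderOf_pos g
    have hle : n / orderOf g ≤ n := Nat.div_le_self _ _
    rw [regIndex_eq g, Nat.cast_sub hle, Nat.cast_div_charZero hd]
    have hd0 : (orderOf g : ℚ) ≠ 0 := by positivity
    field_simp
  refine ⟨key, ?_, ?_, ?_, ?_⟩
  · haveI : Fact Q.Prime := ⟨hQp⟩
    haveI : Fintype G := Fintype.ofFinite G
    exact exists_prime_orderOf_dvd_card Q (by rwa [← Nat.card_eq_fintype_card])
  · intro g hg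
    have hgord : 1 < orderOf g := by
      have h0 := orderOf_pos g
      have h1 : orderOf g ≠ 1 := fun h => hg (orderOf_eq_one_iff.mp h)
      omega
    have hQle : Q ≤ orderOf g := Nat.minFac_le_of_dvd hgord (orderOf_dvd_natCard g)
    have hQ0 : (Q : ℚ) ≠ 0 := Nat.cast_ne_zero.mpr hQp.pos.ne'
    have hd0 : (orderOf g : ℚ) ≠ 0 := by positivity
    have hinv : 1 / (orderOf g : ℚ) ≤ 1 / (Q : ℚ) := by
      apply one_div_le_one_div_of_le (by positivity)
      exact_mod_cast hQle
    constructor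
    · rw [key g]
      apply mul_le_mul_of_nonneg_left _ (by positivity)
      linarith
    · rw [key g]
      constructor
      · intro h
        have h2 : 1 / (Q : ℚ) = 1 / (orderOf g : ℚ) := by
          have := mul_left_cancel₀ hn0 h
          linarith
        have h3 : (orderOf g : ℚ) = (Q : ℚ) := by
          field_simp at h2
          exact_mod_cast h2
        exact_mod_cast h3
      · intro h
        rw [h]
  · -- closure of order-Q elements equals Q-torsion
    apply le_antisymm
    · rw [Subgroup.closure_le]
      intro g hg
      simp only [Set.mem_setOf_eq] at hg
      simp only [SetLike.mem_coe, MonoidHom.mem_ker, powMonoidHom_apply]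
      rw [← hg]
      exact pow_orderOf_eq_one g
    · intro g hg
      simp only [MonoidHom.mem_ker, powMonoidHom_apply] at hg
      rcases eq_or_ne g 1 with rfl | hg1
      · exact Subgroup.one_mem _
      · have hord : orderOf g ∣ Q := orderOf_dvd_of_pow_eq_one hg
        have : orderOf g = 1 ∨ orderOf g = Q := (Nat.Prime.eq_one_or_self_of_dvd hQp _ hord).imp id id
        rcases this with h | h
        · exact absurd (orderOf_eq_one_iff.mp h) hg1
        · exact Subgroup.subset_closure h
  · constructor
    · intro h
      have hall : ∀ g : G, g ^ Q = 1 := by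
        intro g
        have : g ∈ (powMonoidHom Q : G →* G).ker := h ▸ Subgroup.mem_top g
        simpa [MonoidHom.mem_ker, powMonoidHom_apply] using this
      have hdvd : Monoid.exponent G ∣ Q := Monoid.exponent_dvd_of_forall_pow_eq_one hall
      have hne : Monoid.exponent G ≠ 1 := by
        intro h1
        have hall1 : ∀ g : G, g = 1 := by
          intro g
          have := Monoid.pow_exponent_eq_one g
          rwa [h1, pow_one] at this
        have : Nat.card G = 1 := Nat.card_eq_one_iff_unique.mpr
          ⟨⟨fun a b => (hall1 a).trans (hall1 b).symm⟩, ⟨1⟩⟩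
        omega
      rcases (Nat.Prime.eq_one_or_self_of_dvd hQp _ hdvd) with h1 | h1
      · exact absurd h1 hne
      · exact h1
    · intro h
      ext g
      simp only [Subgroup.mem_top, iff_true, MonoidHom.mem_ker, powMonoidHom_apply]
      rw [← h]
      exact Monoid.pow_exponent_eq_one g
end

section
/- Let n ≥ 3 be an odd integer, d a squarefree divisor of n with d ≡ 3 (mod 4), and m a divisor of n with d ∣ m. For r ∈ (ℤ/nℤ)ˣ set χ_d(r) = (r|d), the Jacobi symbol, which is well defined since d ∣ n. Then the map f : (ℤ/nℤ)ˣ → (ℤ/mℤ)ˣ defined by f(r) = χ_d(r)·(r mod m) is a group homomorphism whose image is a subgroup of index 2 in (ℤ/mℤ)ˣ. -/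
open jacobiSym

lemma jac_sq {d : ℕ} (u : (ZMod d)ˣ) :
    jacobiSym ((u : ZMod d).val : ℤ) d * jacobiSym ((u : ZMod d).val : ℤ) d = 1 := by
  have h : Int.gcd ((u : ZMod d).val : ℤ) d = 1 := by
    rw [Int.gcd_natCast_natCast]; exact ZMod.val_coe_unit_coprime u
  rcases jacobiSym.eq_one_or_neg_one h with h1 | h1 <;> rw [h1] <;> norm_num

lemma jac_val_eq {d : ℕ} [NeZero d] (a : ZMod d) (b : ℤ) (h : (b : ZMod d) = a) :
    jacobiSym (a.val : ℤ) d = jacobiSym b d := by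
  apply jacobiSym.mod_left'
  have : ((a.val : ℤ) : ZMod d) = (b : ZMod d) := by
    rw [h, Int.cast_natCast, ZMod.natCast_val, ZMod.cast_id]
  exact ((ZMod.intCast_eq_intCast_iff _ _ _).mp this.symm).symm

def jacobiChar (d : ℕ) [NeZero d] : (ZMod d)ˣ →* ℤˣ where
  toFun u := ⟨jacobiSym ((u : ZMod d).val : ℤ) d, jacobiSym ((u : ZMod d).val : ℤ) d,
    jac_sq u, jac_sq u⟩
  map_one' := by
    ext
    show jacobiSym (((1 : (ZMod d)ˣ) : ZMod d).val : ℤ) d = 1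
    rw [jac_val_eq _ 1 (by norm_num), jacobiSym.one_left]
  map_mul' u v := by
    ext
    show jacobiSym (((u * v : (ZMod d)ˣ) : ZMod d).val : ℤ) d = _
    rw [jac_val_eq _ (((u : ZMod d).val : ℤ) * ((v : ZMod d).val : ℤ)) (by
      push_cast
      rw [ZMod.natCast_val, ZMod.natCast_val, ZMod.cast_id, ZMod.cast_id]),
      jacobiSym.mul_left]
    rfl

lemma jacobiChar_apply {d : ℕ} [NeZero d] (u : (ZMod d)ˣ) :
    (jacobiChar d u : ℤ) = jacobiSym ((u : ZMod d).val : ℤ) d := rfl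

lemma jacobiChar_neg_one {d : ℕ} [NeZero d] (hd4 : d % 4 = 3) :
    jacobiChar d (-1) = -1 := by
  have hodd : Odd d := by rw [Nat.odd_iff]; omega
  ext
  rw [jacobiChar_apply]
  rw [jac_val_eq _ (-1) (by push_cast; norm_num), jacobiSym.at_neg_one hodd,
    ZMod.χ₄_nat_three_mod_four hd4]
  rfl

lemma exists_jacobiChar_neg_one {d : ℕ} [NeZero d] (hsf : Squarefree d) (hd4 : d % 4 = 3) :
    ∃ u : (ZMod d)ˣ, jacobiChar d u = -1 := by
  have hd1 : d ≠ 1 := by omega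
  have hodd : d % 2 = 1 := by omega
  set p := d.minFac with hp
  have pp : p.Prime := Nat.minFac_prime hd1
  have hpd : p ∣ d := Nat.minFac_dvd d
  set e := d / p with he
  have hde : d = p * e := (Nat.mul_div_cancel' hpd).symm
  have hp2 : p ≠ 2 := by intro h; rw [h] at hpd; omega
  clear_value p e
  have hpe : Nat.Coprime p e := by
    rw [pp.coprime_iff_not_dvd]
    intro hcon
    exact pp.not_isUnit (hsf p (hde ▸ mul_dvd_mul_left p hcon))
  haveI : Fact p.Prime := ⟨pp⟩
  obtain ⟨b, hb⟩ := FiniteField.exists_nonsquare (F := ZMod p)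
    (by rw [ZMod.ringChar_zmod_n]; exact hp2)
  have hleg : legendreSym p (b.val : ℤ) = -1 := by
    apply (legendreSym.eq_neg_one_iff p).mpr
    rwa [Int.cast_natCast, ZMod.natCast_val, ZMod.cast_id]
  obtain ⟨k, hk1, hk2⟩ := Nat.chineseRemainder hpe b.val 1
  have hne : e ≠ 0 := by intro h; rw [h, mul_zero] at hde; exact (NeZero.ne d) hde
  have hjk : jacobiSym (k : ℤ) d = -1 := by
    rw [hde, jacobiSym.mul_right' _ pp.ne_zero hne]
    have h1 : jacobiSym (k : ℤ) p = -1 := by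
      have hmod : (k : ℤ) % p = ((b.val : ℕ) : ℤ) % p := by
        exact_mod_cast congrArg (Nat.cast (R := ℤ)) hk1
      rw [jacobiSym.mod_left' hmod, ← legendreSym.to_jacobiSym]
      exact hleg
    have h2 : jacobiSym (k : ℤ) e = 1 := by
      have hmod : (k : ℤ) % e = (1 : ℤ) % e := by
        exact_mod_cast congrArg (Nat.cast (R := ℤ)) hk2
      rw [jacobiSym.mod_left' hmod, jacobiSym.one_left]
    rw [h1, h2]; norm_num
  have hco : Nat.Coprime k d := by
    have h1 : Int.gcd (k : ℤ) d = 1 := by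
      by_contra hc
      have := jacobiSym.eq_zero_iff_not_coprime.mpr hc
      omega
    rwa [Int.gcd_natCast_natCast] at h1
  have hu : IsUnit ((k : ℕ) : ZMod d) := (ZMod.isUnit_iff_coprime k d).mpr hco
  refine ⟨hu.unit, ?_⟩
  ext
  rw [jacobiChar_apply, jac_val_eq _ (k : ℤ) (by rw [Int.cast_natCast]; exact hu.unit_spec), hjk]
  rfl

/- Let `n ≥ 3` be odd, `d` a squarefree divisor of `n` with `d ≡ 3 (mod 4)`, and
`m` a divisor of `n` with `d ∣ m`.  Then the map
`f : (ℤ/nℤ)ˣ → (ℤ/mℤ)ˣ`, `f(r) = χ_d(r)·(r mod m)` — where `χ_d(r) = (r|d)` is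
the Jacobi symbol — is a group homomorphism whose image has index `2`. -/
theorem jacobi_twisted_reduction_index_two
    (n d m : ℕ) (hn : 3 ≤ n) (hodd : Odd n) (hdn : d ∣ n)
    (hsf : Squarefree d) (hd4 : d % 4 = 3) (hmn : m ∣ n) (hdm : d ∣ m) :
    ∃ f : (ZMod n)ˣ →* (ZMod m)ˣ,
      (∀ r : (ZMod n)ˣ, (f r : ZMod m) =
        ((jacobiSym ((r : ZMod n).val : ℤ) d : ℤ) : ZMod m) *
          (ZMod.castHom hmn (ZMod m) (r : ZMod n))) ∧
      f.range.index = 2 := by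
  haveI : NeZero n := ⟨by omega⟩
  haveI : NeZero d := ⟨by omega⟩
  haveI : NeZero m := ⟨by intro h; subst h; have := Nat.eq_zero_of_zero_dvd hmn; omega⟩
  set ι : ℤˣ →* (ZMod m)ˣ := Units.map (Int.castRingHom (ZMod m)).toMonoidHom with hι
  set χn : (ZMod n)ˣ →* ℤˣ := (jacobiChar d).comp (ZMod.unitsMap hdn) with hχ
  set f : (ZMod n)ˣ →* (ZMod m)ˣ := (ι.comp χn) * ZMod.unitsMap hmn with hf
  have hχn : ∀ r : (ZMod n)ˣ, (χn r : ℤ) = jacobiSym ((r : ZMod n).val : ℤ) d := by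
    intro r
    rw [hχ, MonoidHom.comp_apply, jacobiChar_apply]
    refine jac_val_eq _ _ ?_
    rw [Int.cast_natCast, ZMod.natCast_val]
    rfl
  have hcomp : (ZMod.unitsMap hdm).comp (ZMod.unitsMap hmn) = ZMod.unitsMap hdn :=
    ZMod.unitsMap_comp hdm hmn
  have hιε : ∀ ε : ℤˣ, (jacobiChar d) (ZMod.unitsMap hdm (ι ε)) = ε := by
    intro ε
    rcases Int.units_eq_one_or ε with h | h <;> subst h
    · simp
    · have e1 : ι (-1) = -1 := by
        ext; simp [hι]
      have e2 : ZMod.unitsMap hdm (-1 : (ZMod m)ˣ) = -1 := by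
        ext; simp [ZMod.unitsMap_def]
      rw [e1, e2, jacobiChar_neg_one hd4]
  refine ⟨f, ?_, ?_⟩
  · intro r
    rw [hf]
    show (ι (χn r) : ZMod m) * (ZMod.unitsMap hmn r : ZMod m) = _
    rw [show (ι (χn r) : ZMod m) = ((χn r : ℤ) : ZMod m) from rfl, hχn r]
    rfl
  · have hrange : f.range = ((jacobiChar d).comp (ZMod.unitsMap hdm)).ker := by
      ext s
      simp only [MonoidHom.mem_range, MonoidHom.mem_ker, MonoidHom.comp_apply]
      constructor
      · rintro ⟨r, rfl⟩
        have hfr : f r = ι (χn r) * ZMod.unitsMap hmn r := rfl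
        rw [hfr, map_mul, map_mul, hιε (χn r)]
        have hcr := DFunLike.congr_fun hcomp r
        simp only [MonoidHom.comp_apply] at hcr
        have h2 : jacobiChar d (ZMod.unitsMap hdm (ZMod.unitsMap hmn r)) = χn r := by
          rw [hcr, hχ, MonoidHom.comp_apply]
        rw [h2]
        exact Int.units_mul_self _
      · intro hs
        obtain ⟨r, rfl⟩ := ZMod.unitsMap_surjective hmn s
        refine ⟨r, ?_⟩
        have hχ1 : χn r = 1 := by
          have hcr := DFunLike.congr_fun hcomp r
          simp only [MonoidHom.comp_apply] at hcr
          rw [hχ, MonoidHom.comp_apply, ← hcr]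
          exact hs
        show ι (χn r) * ZMod.unitsMap hmn r = ZMod.unitsMap hmn r
        rw [hχ1, map_one, one_mul]
    rw [hrange, Subgroup.index_ker]
    have htop : ((jacobiChar d).comp (ZMod.unitsMap hdm)).range = ⊤ := by
      rw [Subgroup.eq_top_iff']
      intro x
      rcases Int.units_eq_one_or x with h | h <;> subst h
      · exact ⟨1, map_one _⟩
      · obtain ⟨u, hu⟩ := exists_jacobiChar_neg_one hsf hd4
        obtain ⟨s, hs⟩ := ZMod.unitsMap_surjective hdm u
        exact ⟨s, by rw [MonoidHom.comp_apply, hs, hu]⟩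
    rw [htop]
    rw [Nat.card_congr Subgroup.topEquiv.toEquiv, Nat.card_eq_fintype_card]
    decide
end

section
/- Let n ≥ 3 be an odd integer, d a squarefree divisor of n with d ≡ 3 (mod 4), and m a divisor of n with d ∤ m. For r ∈ (ℤ/nℤ)ˣ set χ_d(r) = (r|d), the Jacobi symbol, which is well defined since d ∣ n. Then the group homomorphism f : (ℤ/nℤ)ˣ → (ℤ/mℤ)ˣ defined by f(r) = χ_d(r)·(r mod m) is surjective. -/
/-- The Jacobi symbol of a unit modulo `n` with respect to a divisor `d` of `n`
is `±1`. -/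
lemma jacobi_unit_pm (n d : ℕ) (hdn : d ∣ n) (r : (ZMod n)ˣ) :
    jacobiSym (((r : ZMod n).val : ℤ)) d = 1 ∨
      jacobiSym (((r : ZMod n).val : ℤ)) d = -1 := by
  apply jacobiSym.eq_one_or_neg_one
  have h := (ZMod.val_coe_unit_coprime r).coprime_dvd_right hdn
  simpa [Int.gcd_natCast_natCast] using h

lemma jacobi_val_mul (n d : ℕ) [NeZero n] (hdn : d ∣ n) (a b : ZMod n) :
    jacobiSym (((a * b : ZMod n).val : ℤ)) d =
      jacobiSym ((a.val : ℤ)) d * jacobiSym ((b.val : ℤ)) d := by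
  rw [← jacobiSym.mul_left]
  apply jacobiSym.mod_left'
  have h : ((a * b).val : ℤ) % n = ((a.val : ℤ) * (b.val : ℤ)) % n := by
    rw [ZMod.val_mul]
    push_cast [Int.natCast_mod]
    simp
  calc ((a * b).val : ℤ) % d = ((a * b).val : ℤ) % n % d := by
        rw [Int.emod_emod_of_dvd _ (Int.natCast_dvd_natCast.mpr hdn)]
    _ = ((a.val : ℤ) * (b.val : ℤ)) % n % d := by rw [h]
    _ = ((a.val : ℤ) * (b.val : ℤ)) % d :=
        Int.emod_emod_of_dvd _ (Int.natCast_dvd_natCast.mpr hdn)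

/-- The Jacobi character `(ZMod n)ˣ →* ℤˣ`. -/
def jacobiUnitsChar (n d : ℕ) (hn : 1 < n) (hdn : d ∣ n) : (ZMod n)ˣ →* ℤˣ where
  toFun r := if jacobiSym (((r : ZMod n).val : ℤ)) d = 1 then 1 else -1
  map_one' := by
    haveI : Fact (1 < n) := ⟨hn⟩
    simp [ZMod.val_one, jacobiSym.one_left]
  map_mul' r s := by
    have := NeZero.of_gt hn
    have hmul : jacobiSym ((((r * s : (ZMod n)ˣ) : ZMod n).val : ℤ)) d =
        jacobiSym (((r : ZMod n).val : ℤ)) d * jacobiSym (((s : ZMod n).val : ℤ)) d := by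
      simpa using jacobi_val_mul n d hdn (r : ZMod n) (s : ZMod n)
    rcases jacobi_unit_pm n d hdn r with hr | hr <;>
      rcases jacobi_unit_pm n d hdn s with hs | hs <;>
        · rw [hmul, hr, hs]; norm_num

lemma jacobiUnitsChar_coe (n d : ℕ) (hn : 1 < n) (hdn : d ∣ n) (r : (ZMod n)ˣ) :
    ((jacobiUnitsChar n d hn hdn r : ℤˣ) : ℤ) = jacobiSym (((r : ZMod n).val : ℤ)) d := by
  rcases jacobi_unit_pm n d hdn r with hr | hr <;>
    simp [jacobiUnitsChar, hr]

/-- Existence of a prime dividing `d` but not `m`. -/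
lemma exists_prime_dvd_not_dvd {d m : ℕ} (hsf : Squarefree d) (hdm : ¬ d ∣ m) :
    ∃ p : ℕ, p.Prime ∧ p ∣ d ∧ ¬ p ∣ m := by
  by_contra h
  push_neg at h
  apply hdm
  have := Nat.prod_primeFactors_of_squarefree hsf
  rw [← this]
  exact Finset.prod_primes_dvd m
    (fun p hp => (Nat.prime_of_mem_primeFactors hp).prime)
    (fun p hp => h p (Nat.prime_of_mem_primeFactors hp)
      (Nat.dvd_of_mem_primeFactors hp))

lemma gcd_eq_of_modEq {q x y : ℕ} (h : x ≡ y [MOD q]) : Nat.gcd q x = Nat.gcd q y := by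
  rw [Nat.gcd_rec q x, Nat.gcd_rec q y, h]

/-- Key existence lemma: a unit mod `n` reducing to `1` mod `m` with Jacobi
symbol `-1` with respect to `d`. -/
lemma exists_twist_unit (n d m : ℕ) (hn : 3 ≤ n) (hodd : Odd n) (hdn : d ∣ n)
    (hsf : Squarefree d) (hmn : m ∣ n) (hdm : ¬ d ∣ m) :
    ∃ s : (ZMod n)ˣ, ZMod.unitsMap hmn s = 1 ∧
      jacobiSym (((s : ZMod n).val : ℤ)) d = -1 := by
  have hn0 : n ≠ 0 := by omega
  haveI : NeZero n := ⟨hn0⟩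
  obtain ⟨p, hp, hpd, hpm⟩ := exists_prime_dvd_not_dvd hsf hdm
  haveI : Fact p.Prime := ⟨hp⟩
  have hpn : p ∣ n := hpd.trans hdn
  have hp2 : p ≠ 2 := by
    rintro rfl
    obtain ⟨c, hc⟩ := hpn
    obtain ⟨j, hj⟩ := hodd
    omega
  have hd0 : d ≠ 0 := fun h => hn0 (Nat.eq_zero_of_zero_dvd (h ▸ hdn))
  -- a quadratic nonresidue mod p
  obtain ⟨b, hb⟩ := FiniteField.exists_nonsquare
    (F := ZMod p) (by rw [ZMod.ringChar_zmod_n]; exact hp2)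
  have hb0 : b ≠ 0 := fun h => hb (h ▸ IsSquare.zero)
  set a : ℕ := b.val with ha
  have hab : (a : ZMod p) = b := by rw [ha, ZMod.natCast_val, ZMod.cast_id]
  have hpa : ¬ p ∣ a := by
    intro h
    apply hb0
    rw [← hab]
    exact (ZMod.natCast_eq_zero_iff a p).mpr h
  -- decomposition n = p^k * t
  set k : ℕ := n.factorization p with hk
  set t : ℕ := n / p ^ k with ht
  have hkpos : 0 < k := hp.factorization_pos_of_dvd hn0 hpn
  have hnt : p ^ k * t = n := Nat.ordProj_mul_ordCompl_eq_self n p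
  have hpt : ¬ p ∣ t := Nat.not_dvd_ordCompl hp hn0
  have hcop : Nat.Coprime (p ^ k) t :=
    Nat.Coprime.pow_left k ((Nat.Prime.coprime_iff_not_dvd hp).mpr hpt)
  -- e = d / p
  obtain ⟨e, he⟩ := hpd
  have hpe : ¬ p ∣ e := by
    intro hpe'
    exact hp.not_isUnit (hsf p (by obtain ⟨c, rfl⟩ := hpe'; exact ⟨c, by rw [he]; ring⟩))
  have het : e ∣ t := by
    have hen : e ∣ p ^ k * t := hnt ▸ (Dvd.dvd.trans ⟨p, by rw [he]; ring⟩ hdn)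
    exact (((Nat.Prime.coprime_iff_not_dvd hp).mpr hpe).symm.pow_right k).dvd_of_dvd_mul_left hen
  have hmt : m ∣ t := by
    have hmn' : m ∣ p ^ k * t := hnt ▸ hmn
    exact (((Nat.Prime.coprime_iff_not_dvd hp).mpr hpm).symm.pow_right k).dvd_of_dvd_mul_left hmn'
  -- CRT
  obtain ⟨x, hx1, hx2⟩ := Nat.chineseRemainder hcop a 1
  have hxp : x ≡ a [MOD p] := hx1.of_dvd (dvd_pow_self p hkpos.ne')
  have hxcop : Nat.Coprime x n := by
    rw [← hnt, Nat.coprime_mul_iff_right]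
    constructor
    · apply Nat.Coprime.pow_right
      have : Nat.gcd p x = Nat.gcd p a := gcd_eq_of_modEq hxp
      have hpa' : Nat.Coprime p a := (Nat.Prime.coprime_iff_not_dvd hp).mpr hpa
      exact Nat.Coprime.symm (by rwa [Nat.Coprime, this])
    · have : Nat.gcd t x = Nat.gcd t 1 := gcd_eq_of_modEq hx2
      exact Nat.Coprime.symm (by rw [Nat.Coprime, this, Nat.gcd_one_right])
  refine ⟨ZMod.unitOfCoprime x hxcop, ?_, ?_⟩
  · apply Units.ext
    have : (ZMod.castHom hmn (ZMod m)) ((ZMod.unitOfCoprime x hxcop : ZMod n)) = 1 := by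
      rw [ZMod.coe_unitOfCoprime]
      have hxm : x ≡ 1 [MOD m] := hx2.of_dvd hmt
      have : (x : ZMod m) = ((1 : ℕ) : ZMod m) := (ZMod.natCast_eq_natCast_iff x 1 m).mpr hxm
      simp [this]
    simpa [ZMod.unitsMap_def] using this
  · -- Jacobi symbol computation
    have hval : ((ZMod.unitOfCoprime x hxcop : ZMod n)).val = x % n := by
      rw [ZMod.coe_unitOfCoprime, ZMod.val_natCast]
    rw [hval]
    have hmodn : jacobiSym (((x % n : ℕ) : ℤ)) d = jacobiSym ((x : ℤ)) d := by
      apply jacobiSym.mod_left'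
      rw [Int.natCast_mod, Int.emod_emod_of_dvd _ (Int.natCast_dvd_natCast.mpr hdn)]
    rw [hmodn]
    -- split d = p * e
    have hp0 : p ≠ 0 := hp.pos.ne'
    have he0 : e ≠ 0 := fun h => hd0 (by rw [he, h, mul_zero])
    rw [he, jacobiSym.mul_right' _ hp0 he0]
    have h1 : jacobiSym ((x : ℤ)) p = -1 := by
      rw [← jacobiSym.legendreSym.to_jacobiSym]
      rw [legendreSym.eq_neg_one_iff]
      have : ((x : ℤ) : ZMod p) = b := by
        push_cast
        rw [(ZMod.natCast_eq_natCast_iff x a p).mpr hxp, hab]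
      rwa [this]
    have h2 : jacobiSym ((x : ℤ)) e = 1 := by
      have hxe : x ≡ 1 [MOD e] := hx2.of_dvd het
      have : jacobiSym ((x : ℤ)) e = jacobiSym ((1 : ℤ)) e := by
        apply jacobiSym.mod_left'
        have := (ZMod.natCast_eq_natCast_iff x 1 e).mpr hxe
        have h' : (x : ℤ) % e = (1 : ℕ) % e := by
          rw [← Int.natCast_mod, ← Int.natCast_mod, hxe]
        simpa using h'
      rw [this, jacobiSym.one_left]
    rw [h1, h2]
    ring

/- Let `n ≥ 3` be odd, `d` a squarefree divisor of `n` with `d ≡ 3 (mod 4)`, and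
`m` a divisor of `n` with `d ∤ m`.  Then the group homomorphism
`f : (ℤ/nℤ)ˣ → (ℤ/mℤ)ˣ`, `f(r) = χ_d(r)·(r mod m)` — where `χ_d(r) = (r|d)` is
the Jacobi symbol — is surjective. -/
theorem jacobi_twisted_reduction_surjective
    (n d m : ℕ) (hn : 3 ≤ n) (hodd : Odd n) (hdn : d ∣ n)
    (hsf : Squarefree d) (hd4 : d % 4 = 3) (hmn : m ∣ n) (hdm : ¬ d ∣ m) :
    ∃ f : (ZMod n)ˣ →* (ZMod m)ˣ,
      (∀ r : (ZMod n)ˣ, (f r : ZMod m) =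
        ((jacobiSym ((r : ZMod n).val : ℤ) d : ℤ) : ZMod m) *
          (ZMod.castHom hmn (ZMod m) (r : ZMod n))) ∧
      Function.Surjective f := by
  have hn1 : 1 < n := by omega
  haveI : NeZero n := ⟨by omega⟩
  haveI : NeZero m := ⟨fun h => by
    have := Nat.eq_zero_of_zero_dvd (h ▸ hmn); omega⟩
  set χ : (ZMod n)ˣ →* (ZMod m)ˣ :=
    (Units.map (Int.castRingHom (ZMod m)).toMonoidHom).comp (jacobiUnitsChar n d hn1 hdn)
    with hχ
  refine ⟨χ * ZMod.unitsMap hmn, ?_, ?_⟩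
  · intro r
    have hcoe : ((χ r : (ZMod m)ˣ) : ZMod m) =
        ((jacobiSym ((r : ZMod n).val : ℤ) d : ℤ) : ZMod m) := by
      rw [hχ]
      simp only [MonoidHom.comp_apply, Units.coe_map, RingHom.toMonoidHom_eq_coe,
        MonoidHom.coe_coe, Int.coe_castRingHom]
      rw [jacobiUnitsChar_coe]
    simp only [MonoidHom.mul_apply, Units.val_mul, hcoe]
    simp [ZMod.unitsMap_def]
  · intro u
    obtain ⟨r, hr⟩ := ZMod.unitsMap_surjective hmn u
    rcases jacobi_unit_pm n d hdn r with hjr | hjr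
    · refine ⟨r, ?_⟩
      have : jacobiUnitsChar n d hn1 hdn r = 1 := by
        apply Units.ext; rw [jacobiUnitsChar_coe]; simpa using hjr
      simp [MonoidHom.mul_apply, hχ, this, hr]
    · obtain ⟨s, hs1, hs2⟩ := exists_twist_unit n d m hn hodd hdn hsf hmn hdm
      refine ⟨s * r, ?_⟩
      have hχs : jacobiUnitsChar n d hn1 hdn s = -1 := by
        apply Units.ext; rw [jacobiUnitsChar_coe]; simpa using hs2
      have hχr : jacobiUnitsChar n d hn1 hdn r = -1 := by
        apply Units.ext; rw [jacobiUnitsChar_coe]; simpa using hjr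
      simp [MonoidHom.mul_apply, hχ, map_mul, hχs, hχr, hs1, hr]
end

section
/- Let n ≥ 3 be an odd integer and d a squarefree divisor of n with d ≡ 3 (mod 4). The group (ℤ/nℤ)ˣ acts on ℤ/nℤ by r • x = χ_d(r)·r·x, where χ_d(r) = (r|d) is the Jacobi symbol viewed as the unit ±1 in ℤ/nℤ. Then the number of orbits of this action on the set of nonzero elements of ℤ/nℤ equals τ(n) + τ(n/d) − 1, where τ denotes the number-of-divisors function. -/
set_option linter.unusedSectionVars false

namespace OrbitCountAux

/-- The sign character. -/
def eps (n d : ℕ) (r : (ZMod n)ˣ) : ℤ := jacobiSym ((r : ZMod n).val : ℤ) d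

lemma jac_congr (b m : ℕ) (hbm : b ∣ m) {x y : ℕ} (h : x ≡ y [MOD m]) :
    jacobiSym (x : ℤ) b = jacobiSym (y : ℤ) b := by
  apply jacobiSym.mod_left'
  have h' : x % b = y % b := h.of_dvd hbm
  omega

section basic

variable {n d : ℕ} (hn : 3 ≤ n) (hodd : Odd n) (hdn : d ∣ n) (hsf : Squarefree d)
  (hd4 : d % 4 = 3)

include hdn in
lemma eps_mul (r s : (ZMod n)ˣ) : eps n d (r * s) = eps n d r * eps n d s := by
  have h1 : ((r * s : (ZMod n)ˣ) : ZMod n).val = ((r : ZMod n).val * (s : ZMod n).val) % n := by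
    rw [Units.val_mul, ZMod.val_mul]
  rw [eps, h1, jac_congr d n hdn (Nat.mod_modEq _ n),
    Nat.cast_mul, jacobiSym.mul_left]
  rfl

include hn in
lemma eps_one : eps n d 1 = 1 := by
  have : ((1 : (ZMod n)ˣ) : ZMod n).val = 1 := by
    haveI : Fact (1 < n) := ⟨by omega⟩
    rw [Units.val_one, ZMod.val_one]
  rw [eps, this, Nat.cast_one, jacobiSym.one_left]

include hdn in
lemma eps_pm (r : (ZMod n)ˣ) : eps n d r = 1 ∨ eps n d r = -1 := by
  apply jacobiSym.eq_one_or_neg_one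
  have h := (ZMod.val_coe_unit_coprime r).coprime_dvd_right hdn
  simpa [Int.gcd_natCast_natCast] using h

include hn hdn hd4 in
lemma eps_neg_one : eps n d (-1) = -1 := by
  have hval : ((-1 : (ZMod n)ˣ) : ZMod n).val = n - 1 := by
    obtain ⟨m, rfl⟩ : ∃ m, n = m + 1 := ⟨n - 1, by omega⟩
    rw [Units.val_neg, Units.val_one, ZMod.val_neg_one]
    omega
  have hodd' : Odd d := by
    rcases Nat.even_or_odd d with h | h
    · exfalso; rw [Nat.even_iff] at h; omega
    · exact h
  have hcong : ((n - 1 : ℕ) : ℤ) % d = (-1 : ℤ) % d := by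
    obtain ⟨c, rfl⟩ := hdn
    have h1 : ((d * c - 1 : ℕ) : ℤ) = d * c - 1 := by
      have : 1 ≤ d * c := by omega
      omega
    rw [h1]
    conv_lhs => rw [show (d : ℤ) * c - 1 = -1 + c * d by ring]
    rw [Int.add_mul_emod_self_right]
  rw [eps, hval, jacobiSym.mod_left', jacobiSym.at_neg_one hodd', ZMod.χ₄_nat_three_mod_four hd4]
  exact hcong


include hn hdn in
lemma eps_inv (r : (ZMod n)ˣ) : eps n d r⁻¹ = eps n d r := by
  have h := eps_mul hdn r r⁻¹
  rw [mul_inv_cancel, eps_one hn] at h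
  rcases eps_pm hdn (n := n) r with h2 | h2 <;> rcases eps_pm hdn (n := n) r⁻¹ with h3 | h3 <;>
    rw [h2, h3] <;> rw [h2, h3] at h <;> norm_num at h

/-- canonical sign unit -/
def sigma (n d : ℕ) (r : (ZMod n)ˣ) : (ZMod n)ˣ := if eps n d r = 1 then 1 else -1

/-- the twisted multiplication unit -/
def phi (n d : ℕ) (r : (ZMod n)ˣ) : (ZMod n)ˣ := sigma n d r * r

include hn hdn hd4 in
lemma eps_sigma (r : (ZMod n)ˣ) : eps n d (sigma n d r) = eps n d r := by
  rw [sigma]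
  rcases eps_pm hdn (n := n) r with h | h <;> rw [h] <;> simp only [if_true, if_neg (by omega : ¬(-1 : ℤ) = 1)]
  · exact eps_one hn
  · exact eps_neg_one hn hdn hd4

include hn hdn hd4 in
lemma eps_phi (r : (ZMod n)ˣ) : eps n d (phi n d r) = 1 := by
  rw [phi, eps_mul hdn, eps_sigma hn hdn hd4]
  rcases eps_pm hdn (n := n) r with h | h <;> rw [h] <;> norm_num

include hn hdn hd4 in
lemma sigma_mul (r s : (ZMod n)ˣ) : sigma n d (r * s) = sigma n d r * sigma n d s := by
  simp only [sigma, eps_mul hdn]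
  rcases eps_pm hdn (n := n) r with h | h <;> rcases eps_pm hdn (n := n) s with h2 | h2 <;>
    rw [h, h2] <;> norm_num

include hn hdn hd4 in
lemma phi_mul (r s : (ZMod n)ˣ) : phi n d (r * s) = phi n d r * phi n d s := by
  rw [phi, phi, phi, sigma_mul hn hdn hd4]
  exact mul_mul_mul_comm _ _ _ _

include hn hdn hd4 in
lemma phi_one : phi n d 1 = 1 := by
  rw [phi, sigma, eps_one hn]
  simp

include hn hdn hd4 in
lemma phi_inv (r : (ZMod n)ˣ) : phi n d r⁻¹ = (phi n d r)⁻¹ := by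
  have := phi_mul hn hdn hd4 r r⁻¹
  rw [mul_inv_cancel, phi_one hn hdn hd4] at this
  rw [eq_inv_iff_mul_eq_one, mul_comm]
  exact this.symm

lemma eps_of_phi_eq (r : (ZMod n)ˣ) (h : eps n d r = 1) : phi n d r = r := by
  rw [phi, sigma, if_pos h, one_mul]

/-- The orbit set. -/
def Orb (n d : ℕ) (x : ZMod n) : Set (ZMod n) :=
  {y : ZMod n | ∃ r : (ZMod n)ˣ,
    y = ((jacobiSym ((r : ZMod n).val : ℤ) d : ℤ) : ZMod n) * (r : ZMod n) * x}

include hdn in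
lemma coe_sigma (r : (ZMod n)ˣ) :
    ((jacobiSym ((r : ZMod n).val : ℤ) d : ℤ) : ZMod n) = ((sigma n d r : (ZMod n)ˣ) : ZMod n) := by
  rw [sigma]
  rcases eps_pm hdn (n := n) r with h | h
  · rw [if_pos h]
    rw [eps] at h; rw [h]; simp
  · rw [if_neg (by omega)]
    rw [eps] at h; rw [h]; simp

include hdn in
lemma mem_orb_iff (x y : ZMod n) :
    y ∈ Orb n d x ↔ ∃ r : (ZMod n)ˣ, y = ((phi n d r : (ZMod n)ˣ) : ZMod n) * x := by
  constructor
  · rintro ⟨r, rfl⟩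
    exact ⟨r, by rw [coe_sigma hdn, phi, Units.val_mul]⟩
  · rintro ⟨r, rfl⟩
    exact ⟨r, by rw [coe_sigma hdn, phi, Units.val_mul]⟩

include hn hdn hd4 in
lemma orb_eq_of_rel {x y : ZMod n} (r : (ZMod n)ˣ)
    (h : y = ((phi n d r : (ZMod n)ˣ) : ZMod n) * x) : Orb n d x = Orb n d y := by
  ext z
  rw [mem_orb_iff hdn, mem_orb_iff hdn]
  constructor
  · rintro ⟨s, rfl⟩
    refine ⟨s * r⁻¹, ?_⟩
    rw [h, phi_mul hn hdn hd4, phi_inv hn hdn hd4, Units.val_mul]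
    rw [mul_assoc, Units.inv_mul_cancel_left]
  · rintro ⟨s, rfl⟩
    refine ⟨s * r, ?_⟩
    rw [h, phi_mul hn hdn hd4, Units.val_mul]
    ring

include hn in
lemma mem_orb_self (x : ZMod n) : x ∈ Orb n d x := by
  refine ⟨1, ?_⟩
  have : ((1 : (ZMod n)ˣ) : ZMod n).val = 1 := by
    haveI : Fact (1 < n) := ⟨by omega⟩
    rw [Units.val_one, ZMod.val_one]
  rw [this]
  simp

/-- gcd invariant -/
def gc (n : ℕ) (x : ZMod n) : ℕ := Nat.gcd x.val n

/-- sign invariant -/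
def sgn (n d : ℕ) (x : ZMod n) : ℤ :=
  if d ∣ n / gc n x then jacobiSym ((x.val / gc n x : ℕ) : ℤ) d else 1

include hn in
lemma val_e_mul (e : ℕ) (he : e ∣ n) (w : (ZMod n)ˣ) :
    ((e : ZMod n) * (w : ZMod n)).val = e * ((w : ZMod n).val % (n / e)) := by
  haveI : NeZero n := ⟨by omega⟩
  obtain ⟨f, hf⟩ := he
  have he0 : 0 < e := by
    rcases Nat.eq_zero_or_pos e with h | h
    · subst h; simp at hf; omega
    · exact h
  have hfe : n / e = f := by rw [hf, Nat.mul_div_cancel_left _ he0]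
  have h0 : ((e : ZMod n) * (w : ZMod n)).val = e * (w : ZMod n).val % n := by
    rw [ZMod.val_mul, ZMod.val_natCast, Nat.mod_mul_mod]
  rw [hfe, h0]
  generalize (w : ZMod n).val = a
  rw [hf]
  exact Nat.mul_mod_mul_left e _ f

include hn in
lemma gc_e_mul (e : ℕ) (he : e ∣ n) (w : (ZMod n)ˣ) :
    gc n ((e : ZMod n) * (w : ZMod n)) = e := by
  haveI : NeZero n := ⟨by omega⟩
  rw [gc, val_e_mul hn e he w]
  obtain ⟨f, hf⟩ := he
  have he0 : 0 < e := by
    rcases Nat.eq_zero_or_pos e with h | h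
    · subst h; simp at hf; omega
    · exact h
  have hfe : n / e = f := by rw [hf, Nat.mul_div_cancel_left _ he0]
  have hco : Nat.Coprime (w : ZMod n).val f :=
    (ZMod.val_coe_unit_coprime w).coprime_dvd_right ⟨e, by rw [hf]; ring⟩
  have h2 : Nat.gcd ((w : ZMod n).val % f) f = 1 := by
    rw [← Nat.gcd_rec]; exact hco.symm
  rw [hfe]
  rw [hfe] at *
  revert h2
  generalize (w : ZMod n).val = a
  intro h2
  rw [hf, Nat.gcd_mul_left, h2, mul_one]

include hn in
lemma e_mul_ne_zero (e : ℕ) (he : e ∣ n) (hne : e ≠ n) (w : (ZMod n)ˣ) :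
    (e : ZMod n) * (w : ZMod n) ≠ 0 := by
  intro h
  have := gc_e_mul hn e he w
  rw [h] at this
  rw [gc, ZMod.val_zero, Nat.gcd_zero_left] at this
  exact hne this.symm

include hn hdn in
lemma sgn_e_mul (e : ℕ) (he : e ∣ n) (w : (ZMod n)ˣ) :
    sgn n d ((e : ZMod n) * (w : ZMod n)) = if d ∣ n / e then eps n d w else 1 := by
  haveI : NeZero n := ⟨by omega⟩
  have he0 : e ≠ 0 := by rintro rfl; simp at he; omega
  rw [sgn, gc_e_mul hn e he w, val_e_mul hn e he w, Nat.mul_div_cancel_left _ (by omega)]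
  split
  · next hd' =>
    exact jac_congr d (n / e) hd' (Nat.mod_modEq _ _)
  · rfl

include hn in
lemma exists_rep {x : ZMod n} (hx : x ≠ 0) :
    ∃ w : (ZMod n)ˣ, x = (gc n x : ZMod n) * (w : ZMod n) := by
  haveI : NeZero n := ⟨by omega⟩
  set e := gc n x with hge
  have he : e ∣ n := Nat.gcd_dvd_right _ _
  have hne0 : n ≠ 0 := by omega
  have he0 : 0 < e := Nat.gcd_pos_of_pos_right _ (by omega)
  set m := x.val / e with hm
  have hem : e * m = x.val := Nat.mul_div_cancel' (Nat.gcd_dvd_left _ _)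
  have hco : Nat.Coprime m (n / e) := Nat.coprime_div_gcd_div_gcd he0
  haveI : NeZero (n / e) := ⟨by
    have := Nat.div_pos (Nat.le_of_dvd (by omega) he) he0
    omega⟩
  obtain ⟨w, hw⟩ := ZMod.unitsMap_surjective (Nat.div_dvd_of_dvd he)
    (ZMod.unitOfCoprime m hco)
  refine ⟨w, ?_⟩
  have hval : ((w : ZMod n).val : ZMod (n / e)) = (m : ZMod (n / e)) := by
    have := congrArg (Units.val) hw
    rw [ZMod.unitsMap, Units.coe_map, ZMod.coe_unitOfCoprime] at this
    rw [ZMod.natCast_val]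
    exact this
  have hmod : (w : ZMod n).val ≡ m [MOD n / e] :=
    (ZMod.natCast_eq_natCast_iff _ _ _).mp hval
  have hmul : e * (w : ZMod n).val ≡ e * m [MOD n] := by
    have := hmod.mul_left' (c := e)
    rwa [Nat.mul_div_cancel' he] at this
  have : ((e * (w : ZMod n).val : ℕ) : ZMod n) = ((e * m : ℕ) : ZMod n) :=
    (ZMod.natCast_eq_natCast_iff _ _ _).mpr hmul
  rw [hem] at this
  calc x = (x.val : ZMod n) := (ZMod.natCast_rightInverse x).symm
  _ = ((e * (w : ZMod n).val : ℕ) : ZMod n) := this.symm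
  _ = (e : ZMod n) * (w : ZMod n) := by
      push_cast
      rw [ZMod.natCast_rightInverse (w : ZMod n)]

include hn in
lemma e_mul_congr (e : ℕ) (he : e ∣ n) (a b : (ZMod n)ˣ)
    (h : (a : ZMod n).val ≡ (b : ZMod n).val [MOD n / e]) :
    (e : ZMod n) * (a : ZMod n) = (e : ZMod n) * (b : ZMod n) := by
  haveI : NeZero n := ⟨by omega⟩
  have hmul : e * (a : ZMod n).val ≡ e * (b : ZMod n).val [MOD n] := by
    have := h.mul_left' (c := e)
    rwa [Nat.mul_div_cancel' he] at this
  have hc : ((e * (a : ZMod n).val : ℕ) : ZMod n) = ((e * (b : ZMod n).val : ℕ) : ZMod n) :=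
    (ZMod.natCast_eq_natCast_iff _ _ _).mpr hmul
  have ha : (((a : ZMod n).val : ℕ) : ZMod n) = (a : ZMod n) := ZMod.natCast_rightInverse _
  have hb : (((b : ZMod n).val : ℕ) : ZMod n) = (b : ZMod n) := ZMod.natCast_rightInverse _
  push_cast at hc
  rw [ha, hb] at hc
  exact hc

lemma coprime_of_modEq {a b m : ℕ} (h : a ≡ b [MOD m]) (hb : Nat.Coprime b m) :
    Nat.Coprime a m := by
  have hh : a % m = b % m := h
  have h1 : Nat.gcd m a = Nat.gcd m b := by rw [Nat.gcd_rec, hh, ← Nat.gcd_rec]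
  unfold Nat.Coprime
  rw [Nat.gcd_comm, h1, Nat.gcd_comm]
  exact hb

lemma exists_prime_not_dvd {d m : ℕ} (hsf : Squarefree d) (h : ¬ d ∣ m) :
    ∃ p, p.Prime ∧ p ∣ d ∧ ¬ p ∣ m := by
  by_contra hc
  push_neg at hc
  set g := Nat.gcd d m with hg
  have hgd : g ∣ d := Nat.gcd_dvd_left _ _
  have hdg1 : d / g ≠ 1 := by
    intro h1
    have h2 : g * (d / g) = d := Nat.mul_div_cancel' hgd
    rw [h1, mul_one] at h2
    exact h (h2 ▸ Nat.gcd_dvd_right d m)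
  set p := (d / g).minFac with hp
  have hpp : p.Prime := Nat.minFac_prime hdg1
  have hpdg : p ∣ d / g := Nat.minFac_dvd _
  have hpd : p ∣ d := hpdg.trans (Nat.div_dvd_of_dvd hgd)
  have hpm : p ∣ m := hc p hpp hpd
  have hpg : p ∣ g := Nat.dvd_gcd hpd hpm
  have : p * p ∣ (d / g) * g := mul_dvd_mul hpdg hpg
  rw [Nat.div_mul_cancel hgd] at this
  exact hpp.not_isUnit (hsf p this)

include hn hodd hdn hsf hd4 in
lemma exists_unit_eps_neg (e : ℕ) (he : e ∣ n) (hnd : ¬ d ∣ n / e) :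
    ∃ t : (ZMod n)ˣ, (t : ZMod n).val ≡ 1 [MOD n / e] ∧ eps n d t = -1 := by
  haveI : NeZero n := ⟨by omega⟩
  have hn0 : n ≠ 0 := by omega
  have hd0 : d ≠ 0 := hsf.ne_zero
  obtain ⟨p, hp, hpd, hpm⟩ := exists_prime_not_dvd hsf hnd
  haveI := Fact.mk hp
  set k := n.factorization p with hk
  set q := n / p ^ k with hq
  have hpn : p ∣ n := hpd.trans hdn
  have hk0 : 0 < k := hp.factorization_pos_of_dvd hn0 hpn
  have hpq : ¬ p ∣ q := Nat.not_dvd_ordCompl hp hn0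
  have hsplit : p ^ k * q = n := Nat.ordProj_mul_ordCompl_eq_self n p
  have hcopk : Nat.Coprime (p ^ k) q := (Nat.coprime_ordCompl hp hn0).pow_left _
  -- n / e divides q
  have hneq : n / e ∣ q := by
    have h1 : n / e ∣ p ^ k * q := by rw [hsplit]; exact Nat.div_dvd_of_dvd he
    have h2 : Nat.Coprime (n / e) (p ^ k) :=
      ((hp.coprime_iff_not_dvd).mpr hpm).symm.pow_right k
    exact h2.dvd_of_dvd_mul_left h1
  -- d / p divides q
  have hpdp : ¬ p ∣ d / p := by
    intro hcon
    have : p * p ∣ p * (d / p) := mul_dvd_mul_left p hcon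
    rw [Nat.mul_div_cancel' hpd] at this
    exact hp.not_isUnit (hsf p this)
  have hdpq : d / p ∣ q := by
    have h1 : d / p ∣ p ^ k * q := by rw [hsplit]; exact (Nat.div_dvd_of_dvd hpd).trans hdn
    have h2 : Nat.Coprime (d / p) (p ^ k) :=
      ((hp.coprime_iff_not_dvd).mpr hpdp).symm.pow_right k
    exact h2.dvd_of_dvd_mul_left h1
  -- p is odd
  have hp2 : p ≠ 2 := by
    intro h2
    subst h2
    obtain ⟨c, hc⟩ := hpd
    omega
  -- a nonsquare mod p
  obtain ⟨a, ha⟩ := FiniteField.exists_nonsquare (F := ZMod p)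
    (by rw [ZMod.ringChar_zmod_n]; exact hp2)
  set c := a.val with hc
  have hca : (c : ZMod p) = a := ZMod.natCast_rightInverse a
  have hleg : legendreSym p (c : ℤ) = -1 := by
    rw [legendreSym.eq_neg_one_iff]
    push_cast
    rw [hca]
    exact ha
  have hpc : ¬ p ∣ c := by
    intro hcon
    apply ha
    have : (c : ZMod p) = 0 := by
      rw [ZMod.natCast_eq_zero_iff]
      exact hcon
    rw [← hca, this]
    exact ⟨0, by ring⟩
  have hcpk : Nat.Coprime c (p ^ k) :=
    ((hp.coprime_iff_not_dvd).mpr hpc).symm.pow_right k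
  -- CRT
  obtain ⟨t0, ht0c, ht0q⟩ := Nat.chineseRemainder hcopk c 1
  have hcop : Nat.Coprime t0 n := by
    rw [← hsplit]
    exact Nat.Coprime.mul_right (coprime_of_modEq ht0c hcpk)
      (coprime_of_modEq ht0q (Nat.coprime_one_left q))
  refine ⟨ZMod.unitOfCoprime t0 hcop, ?_, ?_⟩
  · have hval : ((ZMod.unitOfCoprime t0 hcop : (ZMod n)ˣ) : ZMod n).val = t0 % n := by
      rw [ZMod.coe_unitOfCoprime, ZMod.val_natCast]
    rw [hval]
    have h1 : t0 % n ≡ t0 [MOD n / e] :=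
      (Nat.mod_modEq t0 n).of_dvd (Nat.div_dvd_of_dvd he)
    exact h1.trans (ht0q.of_dvd hneq)
  · have hval : ((ZMod.unitOfCoprime t0 hcop : (ZMod n)ˣ) : ZMod n).val = t0 % n := by
      rw [ZMod.coe_unitOfCoprime, ZMod.val_natCast]
    rw [eps, hval, jac_congr d n hdn (Nat.mod_modEq t0 n)]
    haveI : NeZero (d / p) := ⟨by
      intro hcon
      have := Nat.mul_div_cancel' hpd
      rw [hcon, mul_zero] at this
      exact hd0 this.symm⟩
    have h2 : jacobiSym (t0 : ℤ) d = jacobiSym (t0 : ℤ) p * jacobiSym (t0 : ℤ) (d / p) := by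
      conv_lhs => rw [← Nat.mul_div_cancel' hpd]
      exact jacobiSym.mul_right _ _ _
    have h3 : jacobiSym (t0 : ℤ) p = -1 := by
      rw [jac_congr p (p ^ k) (dvd_pow_self p hk0.ne') ht0c, ← jacobiSym.legendreSym.to_jacobiSym]
      exact hleg
    have h4 : jacobiSym (t0 : ℤ) (d / p) = 1 := by
      rw [jac_congr (d / p) q hdpq ht0q, Nat.cast_one, jacobiSym.one_left]
    rw [h2, h3, h4]; norm_num

include hn hdn hd4 in
lemma inv_of_rel {x y : ZMod n} (hx : x ≠ 0) (r : (ZMod n)ˣ)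
    (h : y = ((phi n d r : (ZMod n)ˣ) : ZMod n) * x) :
    gc n y = gc n x ∧ sgn n d y = sgn n d x := by
  obtain ⟨w, hw⟩ := exists_rep hn hx
  set e := gc n x with he'
  have he : e ∣ n := Nat.gcd_dvd_right _ _
  have hy : y = (e : ZMod n) * ((phi n d r * w : (ZMod n)ˣ) : ZMod n) := by
    rw [h, hw, Units.val_mul]; ring
  constructor
  · rw [hy, gc_e_mul hn e he]
  · rw [hy, sgn_e_mul hn hdn e he]
    conv_rhs => rw [hw, sgn_e_mul hn hdn e he]
    split
    · next hd' => rw [eps_mul hdn, eps_phi hn hdn hd4, one_mul]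
    · rfl

include hn hodd hdn hsf hd4 in
lemma orb_eq_of_inv {x y : ZMod n} (hx : x ≠ 0) (hy : y ≠ 0)
    (hg : gc n y = gc n x) (hs : sgn n d y = sgn n d x) : Orb n d x = Orb n d y := by
  obtain ⟨w₁, hw₁⟩ := exists_rep hn hx
  obtain ⟨w₂, hw₂⟩ := exists_rep hn hy
  set e := gc n x with he'
  rw [hg] at hw₂
  have he : e ∣ n := Nat.gcd_dvd_right _ _
  have hsx : sgn n d x = (if d ∣ n / e then eps n d w₁ else 1) := by
    conv_lhs => rw [hw₁]
    rw [sgn_e_mul hn hdn e he]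
  have hsy : sgn n d y = (if d ∣ n / e then eps n d w₂ else 1) := by
    conv_lhs => rw [hw₂]
    rw [sgn_e_mul hn hdn e he]
  by_cases hd' : d ∣ n / e
  · have heps : eps n d w₂ = eps n d w₁ := by
      rw [hsx, hsy, if_pos hd', if_pos hd'] at hs
      exact hs
    have hepsv : eps n d (w₂ * w₁⁻¹) = 1 := by
      rw [eps_mul hdn, eps_inv hn hdn, heps]
      rcases eps_pm hdn (n := n) w₁ with h | h <;> rw [h] <;> norm_num
    apply orb_eq_of_rel hn hdn hd4 (w₂ * w₁⁻¹)
    rw [eps_of_phi_eq _ hepsv, hw₂, hw₁, Units.val_mul]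
    have h1 : ((w₁⁻¹ : (ZMod n)ˣ) : ZMod n) * (w₁ : ZMod n) = 1 := w₁.inv_mul
    linear_combination (-(e : ZMod n) * (w₂ : ZMod n)) * h1
  · obtain ⟨t, ht1, hteps⟩ := exists_unit_eps_neg hn hodd hdn hsf hd4 e he hd'
    rcases eps_pm hdn (n := n) (w₂ * w₁⁻¹) with hv1 | hv1
    · apply orb_eq_of_rel hn hdn hd4 (w₂ * w₁⁻¹)
      rw [eps_of_phi_eq _ hv1, hw₂, hw₁, Units.val_mul]
      have h1 : ((w₁⁻¹ : (ZMod n)ˣ) : ZMod n) * (w₁ : ZMod n) = 1 := w₁.inv_mul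
      linear_combination (-(e : ZMod n) * (w₂ : ZMod n)) * h1
    · have hr : eps n d (w₂ * w₁⁻¹ * t) = 1 := by
        rw [eps_mul hdn, hv1, hteps]
        norm_num
      apply orb_eq_of_rel hn hdn hd4 (w₂ * w₁⁻¹ * t)
      rw [eps_of_phi_eq _ hr, hw₂, hw₁]
      have hkey : (e : ZMod n) * ((w₂ * t : (ZMod n)ˣ) : ZMod n)
          = (e : ZMod n) * ((w₂ : (ZMod n)ˣ) : ZMod n) := by
        apply e_mul_congr hn e he
        have hval : ((w₂ * t : (ZMod n)ˣ) : ZMod n).val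
            = ((w₂ : ZMod n).val * (t : ZMod n).val) % n := by
          rw [Units.val_mul, ZMod.val_mul]
        rw [hval]
        have h1 : ((w₂ : ZMod n).val * (t : ZMod n).val) % n
            ≡ (w₂ : ZMod n).val * (t : ZMod n).val [MOD n / e] :=
          (Nat.mod_modEq _ n).of_dvd (Nat.div_dvd_of_dvd he)
        refine h1.trans ?_
        have h2 : (w₂ : ZMod n).val * (t : ZMod n).val
            ≡ (w₂ : ZMod n).val * 1 [MOD n / e] := Nat.ModEq.mul_left _ ht1
        rw [mul_one] at h2
        exact h2
      calc (e : ZMod n) * (w₂ : ZMod n)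
          = (e : ZMod n) * ((w₂ * t : (ZMod n)ˣ) : ZMod n) := hkey.symm
        _ = ((w₂ * w₁⁻¹ * t : (ZMod n)ˣ) : ZMod n) * ((e : ZMod n) * (w₁ : ZMod n)) := by
            have h1 : ((w₁⁻¹ : (ZMod n)ˣ) : ZMod n) * (w₁ : ZMod n) = 1 := w₁.inv_mul
            rw [Units.val_mul, Units.val_mul, Units.val_mul]
            linear_combination (-(e : ZMod n) * (w₂ : ZMod n) * (t : ZMod n)) * h1

include hn hodd hdn hsf hd4 in
lemma main :
    Nat.card {S : Set (ZMod n) // ∃ x : ZMod n, x ≠ 0 ∧ S = Orb n d x} =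
      n.divisors.card + (n / d).divisors.card - 1 := by
  classical
  haveI : NeZero n := ⟨by omega⟩
  have hn0 : n ≠ 0 := by omega
  have hd0 : d ≠ 0 := hsf.ne_zero
  have hd3 : 3 ≤ d := by omega
  have hnd0 : n / d ≠ 0 := (Nat.div_pos (Nat.le_of_dvd (by omega) hdn) (by omega)).ne'
  -- the d-nonresidue unit
  have hno : ¬ d ∣ n / n := by
    rw [Nat.div_self (show 0 < n by omega)]
    intro h
    rw [Nat.dvd_one] at h
    omega
  obtain ⟨w₀, -, hw₀⟩ := exists_unit_eps_neg hn hodd hdn hsf hd4 n dvd_rfl hno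
  -- index finset
  set F : Finset (ℕ × ℤ) :=
    ((n.divisors.erase n).image fun e => (e, (1 : ℤ))) ∪
      ((n / d).divisors.image fun e => (e, (-1 : ℤ))) with hF
  -- representatives
  set rep : ℕ × ℤ → ZMod n := fun p =>
    if p.2 = 1 then (p.1 : ZMod n) else (p.1 : ZMod n) * ((w₀ : (ZMod n)ˣ) : ZMod n) with hrep
  -- basic facts about members of F
  have hmem : ∀ p ∈ F, p.1 ∣ n ∧ p.1 ≠ n ∧ gc n (rep p) = p.1 ∧
      sgn n d (rep p) = p.2 ∧ rep p ≠ 0 := by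
    intro p hp
    rw [hF, Finset.mem_union, Finset.mem_image, Finset.mem_image] at hp
    rcases hp with ⟨e, he, rfl⟩ | ⟨e, he, rfl⟩
    · rw [Finset.mem_erase, Nat.mem_divisors] at he
      obtain ⟨hne, hednv, -⟩ := he
      have hrp : rep (e, (1 : ℤ)) = (e : ZMod n) * ((1 : (ZMod n)ˣ) : ZMod n) := by
        rw [hrep]; simp
      refine ⟨hednv, hne, ?_, ?_, ?_⟩
      · rw [hrp, gc_e_mul hn e hednv]
      · rw [hrp, sgn_e_mul hn hdn e hednv]
        split
        · exact eps_one hn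
        · rfl
      · rw [hrp]
        exact e_mul_ne_zero hn e hednv hne 1
    · rw [Nat.mem_divisors] at he
      obtain ⟨hend, -⟩ := he
      have hen : e ∣ n := hend.trans (Nat.div_dvd_of_dvd hdn)
      have hnd_lt : n / d < n := Nat.div_lt_self (by omega) (by omega)
      have hne : e ≠ n := by
        have he1 : e ≤ n / d := Nat.le_of_dvd (Nat.pos_of_ne_zero hnd0) hend
        omega
      have hd' : d ∣ n / e := by
        rw [Nat.dvd_div_iff_mul_dvd hen, mul_comm]
        rw [Nat.dvd_div_iff_mul_dvd hdn] at hend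
        exact hend
      have hrp : rep (e, (-1 : ℤ)) = (e : ZMod n) * ((w₀ : (ZMod n)ˣ) : ZMod n) := by
        rw [hrep]; norm_num
      refine ⟨hen, hne, ?_, ?_, ?_⟩
      · rw [hrp, gc_e_mul hn e hen]
      · rw [hrp, sgn_e_mul hn hdn e hen, if_pos hd', hw₀]
      · rw [hrp]
        exact e_mul_ne_zero hn e hen hne w₀
  -- the classifying bijection
  set g : {p : ℕ × ℤ // p ∈ F} → {S : Set (ZMod n) // ∃ x : ZMod n, x ≠ 0 ∧ S = Orb n d x} :=
    fun p => ⟨Orb n d (rep p.1), rep p.1, (hmem p.1 p.2).2.2.2.2, rfl⟩ with hg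
  have hbij : Function.Bijective g := by
    constructor
    · rintro ⟨p, hp⟩ ⟨q, hq⟩ hpq
      rw [hg, Subtype.mk_eq_mk] at hpq
      have hq' : rep q ∈ Orb n d (rep p) := by
        rw [hpq]
        exact mem_orb_self hn _
      rw [mem_orb_iff hdn] at hq'
      obtain ⟨r, hr⟩ := hq'
      obtain ⟨-, -, hgp, hsp, hnp⟩ := hmem p hp
      obtain ⟨-, -, hgq, hsq, -⟩ := hmem q hq
      have hinv := inv_of_rel hn hdn hd4 hnp r hr
      apply Subtype.ext
      apply Prod.ext
      · rw [← hgp, ← hgq, hinv.1]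
      · rw [← hsp, ← hsq, hinv.2]
    · rintro ⟨S, x, hx, rfl⟩
      set e := gc n x with he'
      have he : e ∣ n := Nat.gcd_dvd_right _ _
      have hen : e ≠ n := by
        intro hcon
        apply hx
        have h1 : n ∣ x.val := by
          have h0 : gc n x ∣ x.val := Nat.gcd_dvd_left x.val n
          rw [← he', hcon] at h0
          exact h0
        have h2 : x.val = 0 := Nat.eq_zero_of_dvd_of_lt h1 (ZMod.val_lt x)
        have h3 := ZMod.natCast_rightInverse (n := n) x
        rw [h2] at h3
        rw [← h3]
        simp
      set s := sgn n d x with hs'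
      have hleft : s = 1 → (e, s) ∈ F := by
        intro h1
        rw [h1, hF]
        apply Finset.mem_union_left
        rw [Finset.mem_image]
        exact ⟨e, by rw [Finset.mem_erase]; exact ⟨hen, Nat.mem_divisors.mpr ⟨he, hn0⟩⟩, rfl⟩
      have hmemF : (e, s) ∈ F := by
        by_cases hd' : d ∣ n / e
        · have he0 : 0 < e := Nat.gcd_pos_of_pos_right _ (by omega)
          have hcop : Nat.Coprime (x.val / e) (n / e) := Nat.coprime_div_gcd_div_gcd he0
          have hcopd : Nat.Coprime (x.val / e) d := hcop.coprime_dvd_right hd'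
          have hspm : s = 1 ∨ s = -1 := by
            rw [hs', sgn, ← he', if_pos hd']
            apply jacobiSym.eq_one_or_neg_one
            rw [Int.gcd_natCast_natCast]
            exact hcopd
          rcases hspm with h1 | h1
          · exact hleft h1
          · rw [h1, hF]
            apply Finset.mem_union_right
            rw [Finset.mem_image]
            refine ⟨e, ?_, rfl⟩
            rw [Nat.mem_divisors]
            refine ⟨?_, hnd0⟩
            rw [Nat.dvd_div_iff_mul_dvd hdn, mul_comm]
            rw [Nat.dvd_div_iff_mul_dvd he] at hd'
            exact hd'
        · exact hleft (by rw [hs', sgn, ← he', if_neg hd'])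
      refine ⟨⟨(e, s), hmemF⟩, ?_⟩
      rw [hg]
      apply Subtype.ext
      simp only
      obtain ⟨-, -, hgr, hsr, hnr⟩ := hmem (e, s) hmemF
      exact orb_eq_of_inv hn hodd hdn hsf hd4 hnr hx
        (by rw [hgr, ← he']) (by rw [hsr, ← hs'])
  -- count
  have hcard1 : Nat.card {S : Set (ZMod n) // ∃ x : ZMod n, x ≠ 0 ∧ S = Orb n d x}
      = Nat.card {p : ℕ × ℤ // p ∈ F} := (Nat.card_congr (Equiv.ofBijective g hbij)).symm
  rw [hcard1]
  have hcard2 : Nat.card {p : ℕ × ℤ // p ∈ F} = F.card := Nat.card_eq_finsetCard F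
  rw [hcard2, hF]
  have hdisj : Disjoint ((n.divisors.erase n).image fun e => (e, (1 : ℤ)))
      (((n / d).divisors).image fun e => (e, (-1 : ℤ))) := by
    rw [Finset.disjoint_left]
    rintro p hp1 hp2
    rw [Finset.mem_image] at hp1 hp2
    obtain ⟨a, -, rfl⟩ := hp1
    obtain ⟨b, -, hb⟩ := hp2
    have := congrArg Prod.snd hb
    norm_num at this
  rw [Finset.card_union_of_disjoint hdisj,
    Finset.card_image_of_injective _ (by intro a b h; simpa using h),
    Finset.card_image_of_injective _ (by intro a b h; simpa using h),
    Finset.card_erase_of_mem (Nat.mem_divisors_self n hn0)]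
  have hτ : 1 ≤ n.divisors.card :=
    Finset.card_pos.mpr ⟨n, Nat.mem_divisors_self n hn0⟩
  omega

end basic

end OrbitCountAux

/- Let `n ≥ 3` be odd and `d` a squarefree divisor of `n` with `d ≡ 3 (mod 4)`.
The group `(ℤ/nℤ)ˣ` acts on `ℤ/nℤ` by `r • x = χ_d(r)·r·x`, where
`χ_d(r) = (r|d)` is the Jacobi symbol viewed as the unit `±1` of `ℤ/nℤ`.
The number of orbits of this action on the nonzero elements of `ℤ/nℤ`
equals `τ(n) + τ(n/d) − 1`. -/
theorem orbit_count_twisted_action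
    (n d : ℕ) (hn : 3 ≤ n) (hodd : Odd n) (hdn : d ∣ n)
    (hsf : Squarefree d) (hd4 : d % 4 = 3) :
    Nat.card {S : Set (ZMod n) // ∃ x : ZMod n, x ≠ 0 ∧
      S = {y : ZMod n | ∃ r : (ZMod n)ˣ,
        y = ((jacobiSym ((r : ZMod n).val : ℤ) d : ℤ) : ZMod n) * (r : ZMod n) * x}} =
      n.divisors.card + (n / d).divisors.card - 1 :=
  OrbitCountAux.main hn hodd hdn hsf hd4
end

section
/- Let K be a number field with r₁ real embeddings and r₂ pairs of complex embeddings, and let G be a finite abelian group. Then the cardinality of the tensor product 𝒪_Kˣ ⊗_ℤ G of the unit group of the ring of integers of K with G equals |Hom(G, Kˣ)| · |G|^(r₁ + r₂ − 1), where Hom(G, Kˣ) is the (finite) group of group homomorphisms from G to the multiplicative group of K. -/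
open NumberField NumberField.Units TensorProduct Pointwise

set_option maxSynthPendingDepth 2
set_option synthInstance.maxHeartbeats 400000

private lemma aux_card_torsion_subtype (n q : ℕ) (hn : n ≠ 0) (_hq : q ≠ 0) :
    Nat.card {x : ZMod n // (q : ZMod n) * x = 0} = Nat.gcd n q := by
  have : NeZero n := ⟨hn⟩
  set f : ZMod n →+ ZMod n := AddMonoidHom.mulLeft (q : ZMod n) with hf
  have hker : Nat.card {x : ZMod n // (q : ZMod n) * x = 0} = Nat.card f.ker := by
    apply Nat.card_congr
    exact Equiv.subtypeEquivRight (fun x => by simp [hf, AddMonoidHom.mem_ker])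
  have hrange : f.range = AddSubgroup.zmultiples ((q : ZMod n)) := by
    ext x
    simp only [AddMonoidHom.mem_range, AddSubgroup.mem_zmultiples_iff]
    constructor
    · rintro ⟨y, rfl⟩
      refine ⟨(y.val : ℤ), ?_⟩
      simp [hf, zsmul_eq_mul, ZMod.natCast_val, ZMod.cast_id, mul_comm]
    · rintro ⟨k, rfl⟩
      exact ⟨(k : ZMod n), by simp [hf, zsmul_eq_mul, mul_comm]⟩
  have h1 : Nat.card (ZMod n) = Nat.card (ZMod n ⧸ f.ker) * Nat.card f.ker :=
    AddSubgroup.card_eq_card_quotient_mul_card_addSubgroup f.ker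
  have h2 : Nat.card (ZMod n ⧸ f.ker) = n / Nat.gcd n q := by
    rw [Nat.card_congr (QuotientAddGroup.quotientKerEquivRange f).toEquiv, hrange,
      Nat.card_zmultiples, ZMod.addOrderOf_coe q hn]
  rw [Nat.card_zmod] at h1
  rw [hker]
  have hdvd : Nat.gcd n q ∣ n := Nat.gcd_dvd_left n q
  have hg0 : Nat.gcd n q ≠ 0 := fun h => hn (by simpa [h] using hdvd)
  have hne : 0 < n / Nat.gcd n q :=
    Nat.div_pos (Nat.le_of_dvd (Nat.pos_of_ne_zero hn) hdvd) (Nat.pos_of_ne_zero hg0)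
  rw [h2] at h1
  have h4 := Nat.div_div_self hdvd hn
  have h3 : n / (n / Nat.gcd n q) = Nat.card f.ker := Nat.div_eq_of_eq_mul_right hne h1
  rw [← h3, h4]

private lemma aux_card_hom (n q : ℕ) (hn : n ≠ 0) (hq : q ≠ 0) :
    Nat.card (ZMod q →+ ZMod n) = Nat.gcd n q := by
  rw [← aux_card_torsion_subtype n q hn hq]
  apply Nat.card_congr
  refine (ZMod.lift q).symm.trans
    (Equiv.subtypeEquiv (q := fun x : ZMod n => (q : ZMod n) * x = 0)
      (zmultiplesHom (ZMod n)).symm (fun f => ?_))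
  rw [zmultiplesHom_symm_apply]
  have : f (q : ℤ) = (q : ZMod n) * f 1 := by
    rw [show ((q : ℕ) : ℤ) = (q : ℤ) • (1 : ℤ) by simp, map_zsmul, zsmul_eq_mul]
    push_cast
    ring
  rw [this]

private lemma aux_card_tensor (n q : ℕ) (_hn : n ≠ 0) (hq : q ≠ 0) :
    Nat.card (ZMod n ⊗[ℤ] ZMod q) = Nat.gcd n q := by
  have : NeZero q := ⟨hq⟩
  have e0 : (ℤ ⧸ Ideal.span {(n : ℤ)}) ≃ₗ[ℤ] ZMod n :=
    (Int.quotientSpanNatEquivZMod n).toAddEquiv.toIntLinearEquiv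
  have e1 := TensorProduct.congr e0.symm (LinearEquiv.refl ℤ (ZMod q))
  have e2 := quotTensorEquivQuotSMul (ZMod q) (Ideal.span {(n : ℤ)})
  set p : Submodule ℤ (ZMod q) := Ideal.span {(n : ℤ)} • ⊤ with hp
  have hcard : Nat.card (ZMod n ⊗[ℤ] ZMod q) = Nat.card (ZMod q ⧸ p) :=
    Nat.card_congr (e1.trans e2).toEquiv
  have hH : p.toAddSubgroup = AddSubgroup.zmultiples ((n : ZMod q)) := by
    ext x
    rw [Submodule.mem_toAddSubgroup, hp, Submodule.ideal_span_singleton_smul,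
      AddSubgroup.mem_zmultiples_iff, ← SetLike.mem_coe, Submodule.coe_pointwise_smul]
    constructor
    · rintro ⟨y, -, rfl⟩
      refine ⟨(y.val : ℤ), ?_⟩
      simp [zsmul_eq_mul, ZMod.natCast_val, ZMod.cast_id, mul_comm]
    · rintro ⟨k, rfl⟩
      exact ⟨(k : ZMod q), by simp, by simp [zsmul_eq_mul, mul_comm]⟩
  have hcardp : Nat.card p.toAddSubgroup = q / Nat.gcd q n := by
    rw [hH, Nat.card_zmultiples, ZMod.addOrderOf_coe n hq]
  have hidx : Nat.card (ZMod q ⧸ p) = p.toAddSubgroup.index := rfl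
  have hmul := AddSubgroup.index_mul_card p.toAddSubgroup
  rw [Nat.card_zmod, hcardp] at hmul
  have hdvd : Nat.gcd q n ∣ q := Nat.gcd_dvd_left q n
  have hg0 : Nat.gcd q n ≠ 0 := fun h => hq (by simpa [h] using hdvd)
  have hne : 0 < q / Nat.gcd q n :=
    Nat.div_pos (Nat.le_of_dvd (Nat.pos_of_ne_zero hq) hdvd) (Nat.pos_of_ne_zero hg0)
  have h3 : q / (q / Nat.gcd q n) = p.toAddSubgroup.index :=
    Nat.div_eq_of_eq_mul_left hne hmul.symm
  rw [hcard, hidx, ← h3, Nat.div_div_self hdvd hq, Nat.gcd_comm]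

private lemma aux_card_tensor_eq_hom (n : ℕ) (hn : n ≠ 0) (B : Type*) [AddCommGroup B]
    [Finite B] :
    Nat.card (ZMod n ⊗[ℤ] B) = Nat.card (B →+ ZMod n) := by
  classical
  obtain ⟨ι, _, m, hm, ⟨e⟩⟩ := AddCommGroup.equiv_directSum_zmod_of_finite' B
  have e' : B ≃+ ∀ i, ZMod (m i) := e.trans (DirectSum.addEquivProd _)
  have h1 : Nat.card (ZMod n ⊗[ℤ] B) = ∏ i, Nat.gcd n (m i) := by
    have t1 := TensorProduct.congr (LinearEquiv.refl ℤ (ZMod n)) e'.toIntLinearEquiv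
    have t2 := TensorProduct.piRight ℤ ℤ (ZMod n) (fun i => ZMod (m i))
    rw [Nat.card_congr (t1.trans t2).toEquiv, Nat.card_pi]
    exact Finset.prod_congr rfl fun i _ =>
      aux_card_tensor n (m i) hn (by have := hm i; omega)
  have h2 : Nat.card (B →+ ZMod n) = ∏ i, Nat.gcd n (m i) := by
    have t1 := AddEquiv.addMonoidHomCongrLeft (N := ZMod n) e'
    have t2 := Pi.addMonoidHomAddEquiv (fun i => ZMod (m i)) (ZMod n)
    rw [Nat.card_congr (t1.trans t2).toEquiv, Nat.card_pi]
    exact Finset.prod_congr rfl fun i _ =>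
      aux_card_hom n (m i) hn (by have := hm i; omega)
  rw [h1, h2]

private lemma aux_torsion_part (C A : Type*) [CommGroup C] [Finite C] [IsCyclic C]
    [CommGroup A] [Finite A] :
    Nat.card (Additive C ⊗[ℤ] Additive A) = Nat.card (A →* C) := by
  set n := Nat.card C with hnn
  have hn : n ≠ 0 := Nat.card_pos.ne'
  have eC : Multiplicative (ZMod n) ≃* C := zmodCyclicMulEquiv inferInstance
  have eadd : ZMod n ≃+ Additive C :=
    (AddEquiv.additiveMultiplicative (ZMod n)).symm.trans (MulEquiv.toAdditive eC)
  have h1 : Nat.card (Additive C ⊗[ℤ] Additive A) = Nat.card (ZMod n ⊗[ℤ] Additive A) :=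
    (Nat.card_congr (TensorProduct.congr eadd.toIntLinearEquiv
      (LinearEquiv.refl ℤ (Additive A))).toEquiv).symm
  have h2 : Nat.card (A →* C) = Nat.card (Additive A →+ ZMod n) := by
    refine Nat.card_congr ?_
    exact ((MulEquiv.monoidHomCongrRight (M := A) eC.symm).toEquiv.trans
      MonoidHom.toAdditiveLeft)
  rw [h1, h2, aux_card_tensor_eq_hom n hn]

private noncomputable abbrev jmapKA (K : Type*) [Field K] [NumberField K] :
    (𝓞 K)ˣ →* Kˣ := Units.map (algebraMap (𝓞 K) K).toMonoidHom

private lemma jmapKA_inj (K : Type*) [Field K] [NumberField K] :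
    Function.Injective (jmapKA K) := by
  intro u v h
  ext
  exact congrArg Units.val h

private lemma key_surjKA (K : Type*) [Field K] [NumberField K] (u : Kˣ)
    (hu : IsOfFinOrder u) : ∃ t : torsion K, jmapKA K t = u := by
  obtain ⟨m, hm, hum⟩ := isOfFinOrder_iff_pow_eq_one.mp hu
  have hum' : (u : K) ^ m = 1 := by
    rw [← Units.val_pow_eq_pow_val, hum, Units.val_one]
  have hint : ∀ w : Kˣ, (w : K) ^ m = 1 → IsIntegral ℤ (w : K) := by
    intro w hw
    refine ⟨Polynomial.X ^ m - 1, Polynomial.monic_X_pow_sub_C 1 hm.ne', ?_⟩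
    simp [Polynomial.eval₂_sub, hw]
  have huinv : ((u⁻¹ : Kˣ) : K) ^ m = 1 := by
    rw [← Units.val_pow_eq_pow_val, inv_pow, hum, inv_one, Units.val_one]
  set x : 𝓞 K := ⟨(u : K), hint u hum'⟩ with hx
  set y : 𝓞 K := ⟨((u⁻¹ : Kˣ) : K), hint u⁻¹ huinv⟩ with hy
  have hxy : x * y = 1 := by
    apply NumberField.RingOfIntegers.coe_injective
    rw [map_mul, map_one]
    show (u : K) * ((u⁻¹ : Kˣ) : K) = 1
    rw [← Units.val_mul, mul_inv_cancel, Units.val_one]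
  have hyx : y * x = 1 := by rw [mul_comm] at hxy; exact hxy
  set v : (𝓞 K)ˣ := ⟨x, y, hxy, hyx⟩ with hv
  have hvt : v ∈ torsion K := by
    show v ∈ CommGroup.torsion (𝓞 K)ˣ
    rw [CommGroup.mem_torsion, isOfFinOrder_iff_pow_eq_one]
    refine ⟨m, hm, ?_⟩
    have hxm : x ^ m = 1 := by
      apply NumberField.RingOfIntegers.coe_injective
      rw [map_pow, map_one]
      exact hum'
    ext
    rw [Units.val_pow_eq_pow_val, Units.val_one]
    exact congrArg (algebraMap (𝓞 K) K) hxm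
  exact ⟨⟨v, hvt⟩, by ext; rfl⟩

private lemma card_hom_unitsKA (K : Type*) [Field K] [NumberField K]
    (A : Type*) [CommGroup A] [Finite A] :
    Nat.card (A →* Kˣ) = Nat.card (A →* torsion K) := by
  set T' : Subgroup Kˣ := (torsion K).map (jmapKA K) with hT'
  have h1 : Nat.card (A →* torsion K) = Nat.card (A →* T') :=
    Nat.card_congr (MulEquiv.monoidHomCongrRight (M := A)
      ((torsion K).equivMapOfInjective (jmapKA K) (jmapKA_inj K))).toEquiv
  have h2 : Nat.card (A →* Kˣ) = Nat.card (A →* T') := by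
    refine Nat.card_congr ?_
    refine ⟨fun g => (g.codRestrict T' (fun a => ?_)), fun h => T'.subtype.comp h,
      fun g => by ext a; rfl, fun h => by ext a; rfl⟩
    have hfin : IsOfFinOrder (g a) := g.isOfFinOrder (isOfFinOrder_of_finite a)
    obtain ⟨t, ht⟩ := key_surjKA K (g a) hfin
    exact ⟨t, t.2, ht⟩
  rw [h1, h2]

private lemma aux_splitKA (K : Type*) [Field K] [NumberField K]
    (B : Type*) [AddCommGroup B] :
    Nat.card (Additive ((𝓞 K)ˣ) ⊗[ℤ] B) =
      Nat.card (Additive ↥(torsion K) ⊗[ℤ] B) * Nat.card B ^ rank K := by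
  classical
  set Q := Additive ((𝓞 K)ˣ ⧸ (torsion K)) with hQ
  set π : Additive ((𝓞 K)ˣ) →ₗ[ℤ] Q :=
    (MonoidHom.toAdditive (QuotientGroup.mk' (torsion K))).toIntLinearMap with hπ
  have hsurj : Function.Surjective π :=
    fun x => QuotientGroup.mk'_surjective (torsion K) x.toMul |>.imp
      fun a ha => congrArg Additive.ofMul ha
  obtain ⟨s, hs⟩ := Module.projective_lifting_property π LinearMap.id hsurj
  have hexact := (LinearMap.exact_subtype_ker_map π)
  have hinj : Function.Injective (LinearMap.ker π).subtype := Subtype.val_injective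
  obtain ⟨e, -, -⟩ := (hexact.splitSurjectiveEquiv hinj) ⟨s, hs⟩
  have eker : Additive ↥(torsion K) ≃+ ↥(LinearMap.ker π) := by
    refine AddEquiv.mk' (Equiv.mk
      (fun t => ⟨Additive.ofMul (t.toMul : (𝓞 K)ˣ), ?_⟩)
      (fun x => Additive.ofMul (⟨x.val.toMul, ?_⟩ : torsion K))
      (fun t => rfl) (fun x => rfl)) (fun a b => rfl)
    · simp only [LinearMap.mem_ker, hπ]
      show Additive.ofMul ((QuotientGroup.mk' (torsion K)) t.toMul) = 0
      rw [← ofMul_one]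
      congr 1
      rw [QuotientGroup.mk'_apply, QuotientGroup.eq_one_iff]
      exact t.toMul.2
    · have hx := x.2
      simp only [LinearMap.mem_ker, hπ] at hx
      have : (QuotientGroup.mk' (torsion K)) x.val.toMul = 1 := by
        have := congrArg Additive.toMul hx
        exact this
      rwa [QuotientGroup.mk'_apply, QuotientGroup.eq_one_iff] at this
  have eQ : Q ≃ₗ[ℤ] (Fin (rank K) → ℤ) := (basisModTorsion K).equivFun
  have big : Nat.card (Additive ((𝓞 K)ˣ) ⊗[ℤ] B) =
      Nat.card ((Additive ↥(torsion K) ⊗[ℤ] B) × ((Fin (rank K) → ℤ) ⊗[ℤ] B)) := by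
    refine Nat.card_congr ?_
    refine (TensorProduct.congr e (LinearEquiv.refl ℤ B)).toEquiv.trans ?_
    refine (TensorProduct.prodLeft ℤ ℤ _ _ B).toEquiv.trans ?_
    exact Equiv.prodCongr
      (TensorProduct.congr eker.symm.toIntLinearEquiv (LinearEquiv.refl ℤ B)).toEquiv
      (TensorProduct.congr eQ (LinearEquiv.refl ℤ B)).toEquiv
  have hfree : Nat.card ((Fin (rank K) → ℤ) ⊗[ℤ] B) = Nat.card B ^ rank K := by
    have e1 : ((Fin (rank K) → ℤ) ⊗[ℤ] B) ≃ₗ[ℤ] (Fin (rank K) → B) :=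
      (TensorProduct.comm ℤ _ _).trans <|
        (TensorProduct.piRight ℤ ℤ B (fun _ : Fin (rank K) => ℤ)).trans <|
          LinearEquiv.piCongrRight (fun _ => TensorProduct.rid ℤ B)
    rw [Nat.card_congr e1.toEquiv, Nat.card_pi, Finset.prod_const, Finset.card_univ,
      Fintype.card_fin]
  rw [big, Nat.card_prod, hfree]

/- Let `K` be a number field with `r₁` real embeddings and `r₂` pairs of complex
embeddings (i.e. `r₁` real and `r₂` complex infinite places), and let `A` be a
finite abelian group.  Then
`|𝒪_Kˣ ⊗_ℤ A| = |Hom(A, Kˣ)| · |A|^(r₁ + r₂ − 1)`. -/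
theorem card_units_tensor_finite_abelian
    (K : Type*) [Field K] [NumberField K] (A : Type*) [CommGroup A] [Finite A]
    (r₁ r₂ : ℕ)
    (hr₁ : r₁ = Nat.card {w : NumberField.InfinitePlace K // w.IsReal})
    (hr₂ : r₂ = Nat.card {w : NumberField.InfinitePlace K // w.IsComplex}) :
    Nat.card
        (TensorProduct ℤ (Additive ((NumberField.RingOfIntegers K)ˣ)) (Additive A)) =
      Nat.card (A →* Kˣ) * Nat.card A ^ (r₁ + r₂ - 1) := by
  have hR : Nat.card {w : NumberField.InfinitePlace K // w.IsReal} =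
      NumberField.InfinitePlace.nrRealPlaces K := by
    classical
    rw [Nat.card_eq_fintype_card]
  have hC : Nat.card {w : NumberField.InfinitePlace K // w.IsComplex} =
      NumberField.InfinitePlace.nrComplexPlaces K := by
    classical
    rw [Nat.card_eq_fintype_card]
  have hrank : r₁ + r₂ - 1 = rank K := by
    rw [hr₁, hr₂, hR, hC, rank,
      NumberField.InfinitePlace.card_eq_nrRealPlaces_add_nrComplexPlaces]
  have h1 := aux_splitKA K (Additive A)
  have h2 := aux_torsion_part (↥(torsion K)) A
  have h3 := card_hom_unitsKA K A
  have hcardA : Nat.card (Additive A) = Nat.card A := rfl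
  rw [hrank, h1, h2, hcardA, ← h3]
end

section
/- Let C be a finite cyclic group with generator σ acting by group automorphisms on a finite abelian group N, and let M = Hom(N, ℚ/ℤ) carry the contragredient action (τ·f)(x) = f(τ⁻¹·x). Let ψ : C → M be a 1-cocycle, i.e. ψ(τυ) = ψ(τ) + τ·ψ(υ) for all τ, υ ∈ C. Then ψ is a coboundary — that is, there exists f ∈ M with ψ(τ) = τ·f − f for all τ ∈ C — if and only if ψ(σ)(x) = 0 for every x ∈ N fixed by σ. -/
/- Let `C` be a finite cyclic group with generator `σ`, acting by group
automorphisms on a finite abelian group `N`, and let `M = Hom(N, ℚ/ℤ)` carry the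
contragredient action `(τ·f)(x) = f(τ⁻¹·x)`.  A 1-cocycle `ψ : C → M` is a
coboundary if and only if `ψ(σ)(x) = 0` for every `x ∈ N` fixed by `σ`. -/
theorem cyclic_cocycle_is_coboundary_iff
    (C N : Type*) [Group C] [Finite C] [AddCommGroup N] [Finite N]
    [DistribMulAction C N]
    (σ : C) (hσ : ∀ c : C, c ∈ Subgroup.zpowers σ)
    (ψ : C → (N →+ (ℚ ⧸ AddSubgroup.zmultiples (1 : ℚ))))
    (hψ : ∀ τ υ : C, ∀ x : N, ψ (τ * υ) x = ψ τ x + ψ υ (τ⁻¹ • x)) :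
    (∃ f : N →+ (ℚ ⧸ AddSubgroup.zmultiples (1 : ℚ)),
        ∀ τ : C, ∀ x : N, ψ τ x = f (τ⁻¹ • x) - f x) ↔
      ∀ x : N, σ • x = x → ψ σ x = 0 := by
  constructor
  · rintro ⟨f, hf⟩ x hx
    have hx' : σ⁻¹ • x = x := by
      conv_lhs => rw [← hx, inv_smul_smul]
    rw [hf σ x, hx', sub_self]
  · intro h
    -- T x = σ⁻¹ • x - x as a ℤ-linear map
    set T : N →ₗ[ℤ] N :=
      ((DistribMulAction.toAddMonoidHom N σ⁻¹) - (AddMonoidHom.id N)).toIntLinearMap with hT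
    have hTx : ∀ x : N, T x = σ⁻¹ • x - x := fun x => rfl
    -- ψ σ vanishes on ker T
    have hker : LinearMap.ker T ≤ LinearMap.ker (ψ σ).toIntLinearMap := by
      intro x hx
      have hx1 : σ⁻¹ • x - x = 0 := hx
      have hx2 : σ • x = x := by
        have : σ⁻¹ • x = x := by rwa [sub_eq_zero] at hx1
        conv_lhs => rw [← this, smul_inv_smul]
      exact h x hx2
    -- factor ψ σ through the quotient
    set mbar : (N ⧸ LinearMap.ker T) →ₗ[ℤ] (ℚ ⧸ AddSubgroup.zmultiples (1 : ℚ)) :=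
      (LinearMap.ker T).liftQ (ψ σ).toIntLinearMap hker with hmbar
    set e := T.quotKerEquivRange with he
    set g₀ : CharacterModule (LinearMap.range T) :=
      (mbar ∘ₗ e.symm.toLinearMap).toAddMonoidHom with hg₀
    obtain ⟨g, hg⟩ := CharacterModule.dual_surjective_of_injective (R := ℤ)
      (LinearMap.range T).subtype (Submodule.injective_subtype _) g₀
    -- key identity: ψ σ x = g (σ⁻¹ • x) - g x
    have key : ∀ x : N, ψ σ x = g (σ⁻¹ • x) - g x := by
      intro x
      have h1 : g (T x) = g₀ ⟨T x, LinearMap.mem_range_self T x⟩ :=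
        congrFun (congrArg DFunLike.coe hg) ⟨T x, LinearMap.mem_range_self T x⟩
      have h2 : e (Submodule.Quotient.mk x) = ⟨T x, LinearMap.mem_range_self T x⟩ :=
        Subtype.ext (T.quotKerEquivRange_apply_mk x)
      have h3 : e.symm ⟨T x, LinearMap.mem_range_self T x⟩ = Submodule.Quotient.mk x := by
        rw [← h2, LinearEquiv.symm_apply_apply]
      have h4 : g₀ ⟨T x, LinearMap.mem_range_self T x⟩ = ψ σ x := by
        show mbar (e.symm ⟨T x, LinearMap.mem_range_self T x⟩) = ψ σ x
        rw [h3, hmbar, Submodule.liftQ_apply]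
        rfl
      have h5 : g (T x) = ψ σ x := h1.trans h4
      rw [← h5, hTx, map_sub]
    refine ⟨g, ?_⟩
    -- first prove it for natural powers of σ
    have hone : ∀ x : N, ψ 1 x = 0 := by
      intro x
      have := hψ 1 1 x
      simp only [mul_one, inv_one, one_smul] at this
      exact (left_eq_add.mp this)
    have main : ∀ k : ℕ, ∀ x : N, ψ (σ ^ k) x = g ((σ ^ k)⁻¹ • x) - g x := by
      intro k
      induction k with
      | zero => intro x; simp [hone x]
      | succ n ih =>
        intro x
        have hpow : σ ^ (n + 1) = σ * σ ^ n := by rw [pow_succ']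
        rw [hpow, hψ σ (σ ^ n) x, key x, ih (σ⁻¹ • x)]
        have : (σ ^ n)⁻¹ • σ⁻¹ • x = (σ * σ ^ n)⁻¹ • x := by
          rw [mul_inv_rev, mul_smul]
        rw [this]
        abel
    intro τ x
    obtain ⟨k, rfl⟩ := mem_powers_iff_mem_zpowers.mpr (hσ τ)
    exact main k x
end
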